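/- arXiv:2001.04933 — 8 statements merged into one kernel-verified Lean document; each statement's English description precedes it below -/
import Mathlib

section
/- Let J, K ≥ 1 and N = JK. Let f_0,…,f_{K−1} : ℝ → ℝ be an admissible function family and write f(t) = (f_0(t),…,f_{K−1}(t)) ∈ ℝ^K. Let g_0,…,g_{N−1} ∈ ℝ^J be vectors in general position. Then the following are equivalent: (i) no vector value occurs more than K times among g_0,…,g_{N−1}; (ii) the set of tuples (t_0,…,t_{N−1}) ∈ ℝ^N for which the N rank-one matrices g_n f(t_n)ᵀ (equivalently, the vectors vec(g_n f(t_n)ᵀ)) fail to form a basis of ℝ^{J×K} has Lebesgue measure zero in ℝ^N. -/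
open MeasureTheory Matrix

section Key
variable {K : ℕ} {f : Fin K → ℝ → ℝ}

lemma multilinear_expand {n : ℕ} (M : MultilinearMap ℝ (fun _ : Fin n => (Fin K → ℝ)) ℝ)
    (v : Fin n → Fin K → ℝ) :
    M v = ∑ r : Fin n → Fin K, (∏ i, v i (r i)) * M (fun i => (Pi.single (r i) 1 : Fin K → ℝ)) := by
  have h : v = fun i => ∑ k : Fin K, v i k • (Pi.single k 1 : Fin K → ℝ) := by
    funext i
    ext k'
    simp [Finset.sum_apply, Pi.single_apply, mul_ite]
  conv_lhs => rw [h]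
  rw [M.map_sum]
  refine Finset.sum_congr rfl fun r _ => ?_
  rw [M.map_smul_univ]
  simp [smul_eq_mul]

lemma multilinear_measurable (hmeas : ∀ k, Measurable (f k)) {n : ℕ}
    (M : MultilinearMap ℝ (fun _ : Fin n => (Fin K → ℝ)) ℝ) :
    Measurable (fun t : Fin n → ℝ => M (fun i k => f k (t i))) := by
  have h : ∀ t : Fin n → ℝ, M (fun i k => f k (t i)) =
      ∑ r : Fin n → Fin K, (∏ i, f (r i) (t i)) * M (fun i => (Pi.single (r i) 1 : Fin K → ℝ)) :=
    fun t => multilinear_expand M _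
  simp only [h]
  refine Finset.measurable_sum _ fun r _ => ?_
  refine Measurable.mul ?_ measurable_const
  exact Finset.measurable_prod _ fun i _ => (hmeas (r i)).comp (measurable_pi_apply i)

lemma multilinear_cons_expand {n : ℕ}
    (M : MultilinearMap ℝ (fun _ : Fin (n+1) => (Fin K → ℝ)) ℝ)
    (x : Fin K → ℝ) (w : Fin n → Fin K → ℝ) :
    M (Fin.cons x w) = ∑ k : Fin K, x k * M (Fin.cons (Pi.single k 1 : Fin K → ℝ) w) := by
  have hx : x = ∑ k : Fin K, x k • (Pi.single k 1 : Fin K → ℝ) := by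
    ext k'
    simp [Finset.sum_apply, Pi.single_apply, mul_ite]
  have h0 : ∀ y : Fin K → ℝ, (Fin.cons y w : Fin (n+1) → Fin K → ℝ) =
      Function.update (Fin.cons 0 w : Fin (n+1) → Fin K → ℝ) 0 y := by
    intro y; rw [Fin.update_cons_zero]
  conv_lhs => rw [h0 x, hx]
  rw [M.map_update_sum]
  refine Finset.sum_congr rfl fun k _ => ?_
  rw [M.map_update_smul]
  rw [← h0]
  simp [smul_eq_mul]

lemma key_null (hmeas : ∀ k, Measurable (f k))
    (hzero : ∀ c : Fin K → ℝ, c ≠ 0 → volume {t : ℝ | ∑ k, c k * f k t = 0} = 0) :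
    ∀ (n : ℕ) (M : MultilinearMap ℝ (fun _ : Fin n => (Fin K → ℝ)) ℝ), M ≠ 0 →
      volume {t : Fin n → ℝ | M (fun i k => f k (t i)) = 0} = 0 := by
  intro n
  induction n with
  | zero =>
    intro M hM
    obtain ⟨v, hv⟩ : ∃ v, M v ≠ 0 := by
      by_contra h
      push_neg at h
      exact hM (MultilinearMap.ext fun w => by simpa using h w)
    convert measure_empty
    · ext t
      simp only [Set.mem_setOf_eq, Set.mem_empty_iff_false, iff_false]
      intro h0
      apply hv
      rw [Subsingleton.elim v (fun i k => f k (t i))]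
      exact h0
    · infer_instance
  | succ n ih =>
    intro M hM
    classical
    -- the target set
    set A : Set (Fin (n+1) → ℝ) := {t | M (fun i k => f k (t i)) = 0} with hA
    have hAmeas : MeasurableSet A :=
      measurableSet_eq_fun (multilinear_measurable hmeas M) measurable_const
    -- set over (tail, head)
    set T : Set ((Fin n → ℝ) × ℝ) :=
      {q | M (fun i k => f k ((Fin.cons q.2 q.1 : Fin (n+1) → ℝ) i)) = 0} with hT
    have hconsmeas : Measurable (fun q : (Fin n → ℝ) × ℝ => (Fin.cons q.2 q.1 : Fin (n+1) → ℝ)) := by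
      refine measurable_pi_lambda _ fun i => ?_
      refine Fin.cases ?_ (fun j => ?_) i
      · simpa using measurable_snd
      · exact (measurable_pi_apply j).comp measurable_fst
    have hTmeas : MeasurableSet T := by
      have : T = (fun q : (Fin n → ℝ) × ℝ => (Fin.cons q.2 q.1 : Fin (n+1) → ℝ)) ⁻¹' A := rfl
      rw [this]
      exact hAmeas.preimage hconsmeas
    -- relate volume A with product measure of T
    have e := MeasurableEquiv.piFinSuccAbove (fun _ : Fin (n+1) => ℝ) 0
    have hpres : MeasurePreserving (MeasurableEquiv.piFinSuccAbove (fun _ : Fin (n+1) => ℝ) 0)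
        volume volume := volume_preserving_piFinSuccAbove _ 0
    have hAS : A = (MeasurableEquiv.piFinSuccAbove (fun _ : Fin (n+1) => ℝ) 0) ⁻¹'
        (Prod.swap ⁻¹' T) := by
      ext t
      simp only [Set.mem_preimage, MeasurableEquiv.piFinSuccAbove_apply,
        Fin.insertNthEquiv_symm_apply, Fin.removeNth_zero, Prod.swap,
        Set.mem_setOf_eq, hA, hT, Fin.cons_self_tail]
    have hvol1 : volume A = (volume.prod volume) T := by
      rw [hAS, hpres.measure_preimage (((hTmeas.preimage measurable_swap)).nullMeasurableSet)]
      have : (volume : Measure ((Fin n → ℝ) × ℝ)) = volume.prod volume := rfl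
      calc (volume : Measure (ℝ × (Fin n → ℝ))) (Prod.swap ⁻¹' T)
          = Measure.map Prod.swap (volume.prod volume) T := by
            rw [Measure.map_apply measurable_swap hTmeas]
            rfl
        _ = (volume.prod volume) T := by rw [Measure.prod_swap]
    rw [hvol1]
    rw [MeasureTheory.Measure.measure_prod_null hTmeas]
    -- find k₀ with nonzero curried map
    obtain ⟨v, hv⟩ : ∃ v, M v ≠ 0 := by
      by_contra h
      push_neg at h
      exact hM (MultilinearMap.ext fun w => by simpa using h w)
    have hv' : M (Fin.cons (v 0) (Fin.tail v)) ≠ 0 := by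
      rwa [Fin.cons_self_tail]
    rw [multilinear_cons_expand] at hv'
    obtain ⟨k₀, _, hk₀⟩ := Finset.exists_ne_zero_of_sum_ne_zero hv'
    have hNne : M.curryLeft ((Pi.single k₀ 1 : Fin K → ℝ)) ≠ 0 := by
      intro h0
      apply hk₀
      have : M (Fin.cons ((Pi.single k₀ 1 : Fin K → ℝ)) (Fin.tail v)) = 0 := by
        rw [← M.curryLeft_apply, h0]; rfl
      rw [this, mul_zero]
    have hIH := ih (M.curryLeft ((Pi.single k₀ 1 : Fin K → ℝ))) hNne
    have hae : ∀ᵐ s : Fin n → ℝ,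
        (M.curryLeft ((Pi.single k₀ 1 : Fin K → ℝ))) (fun i k => f k (s i)) ≠ 0 := by
      rw [ae_iff]
      simpa using hIH
    filter_upwards [hae] with s hs
    -- slice at s
    have hslice : Prod.mk s ⁻¹' T = {x : ℝ | ∑ k, (f k x) *
        M (Fin.cons (Pi.single k 1 : Fin K → ℝ) (fun i k => f k (s i))) = 0} := by
      ext x
      simp only [Set.mem_preimage, hT, Set.mem_setOf_eq]
      have harg : (fun i k => f k ((Fin.cons x s : Fin (n+1) → ℝ) i)) =
          Fin.cons (fun k => f k x) (fun i k => f k (s i)) := by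
        funext i
        refine Fin.cases ?_ (fun j => ?_) i <;> simp
      rw [harg, multilinear_cons_expand]
    have hc : (fun k => M (Fin.cons (Pi.single k 1 : Fin K → ℝ) (fun i k => f k (s i)))) ≠ 0 := by
      intro h0
      apply hs
      rw [M.curryLeft_apply]
      exact congrFun h0 k₀
    have := hzero _ hc
    simp only [Pi.zero_apply]
    rw [hslice]
    convert this using 2
    ext x
    simp [mul_comm]
end Key

section Comb
variable {J K : ℕ}

lemma exists_assignment (g : Fin (J * K) → Fin J → ℝ)
    (hcard : ∀ a : Fin J → ℝ, {n : Fin (J * K) | g n = a}.ncard ≤ K) :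
    ∃ τ : Fin J × Fin K ≃ Fin (J * K),
      ∀ (k : Fin K) (i₁ i₂ : Fin J), g (τ (i₁, k)) = g (τ (i₂, k)) → i₁ = i₂ := by
  classical
  have hfin : ∀ a : Fin J → ℝ,
      {n : Fin (J * K) | g n = a}.ncard = (Finset.univ.filter (fun n => g n = a)).card := by
    intro a
    rw [← Set.ncard_coe_finset]
    congr 1
    ext n
    simp
  set key : Fin (J * K) → Fin (J * K) := fun n =>
    (Finset.univ.filter (fun m => g m = g n)).min'
      ⟨n, Finset.mem_filter.2 ⟨Finset.mem_univ n, rfl⟩⟩ with hkey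
  have hkeymem : ∀ n, g (key n) = g n := by
    intro n
    have := Finset.min'_mem (Finset.univ.filter (fun m => g m = g n))
      ⟨n, Finset.mem_filter.2 ⟨Finset.mem_univ n, rfl⟩⟩
    exact (Finset.mem_filter.1 this).2
  have hkeyle : ∀ n m, g m = g n → key n ≤ m := by
    intro n m h
    exact Finset.min'_le _ m (Finset.mem_filter.2 ⟨Finset.mem_univ m, h⟩)
  have hkeyeq : ∀ n m, g m = g n → key m = key n := by
    intro n m h
    refine le_antisymm ?_ ?_
    · exact hkeyle m (key n) (by rw [hkeymem n, h])
    · exact hkeyle n (key m) (by rw [hkeymem m, h])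
  set σ := Tuple.sort key with hσ
  have hmono : Monotone (key ∘ σ) := Tuple.monotone_sort key
  -- core: positions at distance ≥ K have different g values
  have hcore : ∀ p q : Fin (J * K), (p : ℕ) + K ≤ (q : ℕ) → g (σ p) ≠ g (σ q) := by
    intro p q hpq hg
    have hkeypq : key (σ p) = key (σ q) := hkeyeq (σ q) (σ p) hg
    have hval : ∀ r, r ∈ Finset.Icc p q → g (σ r) = g (σ p) := by
      intro r hr
      rw [Finset.mem_Icc] at hr
      have h1 : key (σ p) ≤ key (σ r) := hmono hr.1
      have h2 : key (σ r) ≤ key (σ q) := hmono hr.2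
      have h3 : key (σ r) = key (σ p) := le_antisymm (hkeypq ▸ h2) h1
      calc g (σ r) = g (key (σ r)) := (hkeymem _).symm
        _ = g (key (σ p)) := by rw [h3]
        _ = g (σ p) := hkeymem _
    have himage : (Finset.Icc p q).image (fun r => σ r) ⊆
        Finset.univ.filter (fun m => g m = g (σ p)) := by
      intro m hm
      obtain ⟨r, hr, rfl⟩ := Finset.mem_image.1 hm
      exact Finset.mem_filter.2 ⟨Finset.mem_univ _, hval r hr⟩
    have hcardIcc : (Finset.Icc p q).card = (q : ℕ) + 1 - (p : ℕ) := Fin.card_Icc p q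
    have hcard2 : K + 1 ≤ ((Finset.Icc p q).image (fun r => σ r)).card := by
      rw [Finset.card_image_of_injective _ (Equiv.injective σ), hcardIcc]
      omega
    have := Finset.card_le_card himage
    have hK := hcard (g (σ p))
    rw [hfin] at hK
    omega
  refine ⟨finProdFinEquiv.trans σ, ?_⟩
  intro k i₁ i₂ hg
  by_contra hne
  have hval : ∀ i : Fin J, ((finProdFinEquiv (i, k) : Fin (J * K)) : ℕ) = (k : ℕ) + K * i := by
    intro i; simp [finProdFinEquiv]
  have hmain : ∀ i₁ i₂ : Fin J, (i₁ : ℕ) < (i₂ : ℕ) →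
      g (σ (finProdFinEquiv (i₁, k))) ≠ g (σ (finProdFinEquiv (i₂, k))) := by
    intro j₁ j₂ hlt
    refine hcore _ _ ?_
    rw [hval, hval]
    have h1 : K * ((j₁ : ℕ) + 1) ≤ K * (j₂ : ℕ) := Nat.mul_le_mul_left K hlt
    have h2 : K * ((j₁ : ℕ) + 1) = K * (j₁ : ℕ) + K := by ring
    omega
  rcases lt_trichotomy (i₁ : ℕ) (i₂ : ℕ) with h | h | h
  · exact hmain i₁ i₂ h hg
  · exact hne (Fin.ext h)
  · exact hmain i₂ i₁ h hg.symm
end Comb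

section Alg
variable {J K : ℕ}

/-- The linear map `v ↦ (flattened g_n vᵀ)`. -/
noncomputable def rowMap (g : Fin (J * K) → Fin J → ℝ) (n : Fin (J * K)) :
    (Fin K → ℝ) →ₗ[ℝ] (Fin (J * K) → ℝ) where
  toFun v := fun i => g n (finProdFinEquiv.symm i).1 * v (finProdFinEquiv.symm i).2
  map_add' x y := by funext i; simp [mul_add]
  map_smul' c x := by funext i; simp [smul_eq_mul]; ring

/-- The determinant of the bilinear measurement system, as a multilinear map in the
`K`-dimensional sample vectors. -/
noncomputable def detMap (g : Fin (J * K) → Fin J → ℝ) :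
    MultilinearMap ℝ (fun _ : Fin (J * K) => (Fin K → ℝ)) ℝ :=
  (Matrix.detRowAlternating :
    (Fin (J * K) → ℝ) [⋀^Fin (J * K)]→ₗ[ℝ] ℝ).toMultilinearMap.compLinearMap (rowMap g)

/-- Flattening matrices. -/
noncomputable def matFlat : Matrix (Fin J) (Fin K) ℝ ≃ₗ[ℝ] (Fin (J * K) → ℝ) where
  toFun m := fun i => m (finProdFinEquiv.symm i).1 (finProdFinEquiv.symm i).2
  invFun v := Matrix.of fun j k => v (finProdFinEquiv (j, k))
  map_add' x y := by funext i; simp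
  map_smul' c x := by funext i; simp
  left_inv m := by
    ext j k
    simp
  right_inv v := by
    funext i
    show v (finProdFinEquiv ((finProdFinEquiv.symm i).1, (finProdFinEquiv.symm i).2)) = v i
    rw [Prod.mk.eta, Equiv.apply_symm_apply]

noncomputable def matBasis : Module.Basis (Fin (J * K)) ℝ (Matrix (Fin J) (Fin K) ℝ) :=
  Module.Basis.ofEquivFun matFlat

lemma matBasis_det_eq (g : Fin (J * K) → Fin J → ℝ) (w : Fin (J * K) → Fin K → ℝ) :
    matBasis.det (fun n => (Matrix.of fun j k => g n j * w n k : Matrix (Fin J) (Fin K) ℝ)) =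
      detMap g w := by
  rw [Module.Basis.det_apply]
  have h1 : detMap g w = Matrix.det (Matrix.of fun n i => rowMap g n (w n) i) := rfl
  have h2 : matBasis.toMatrix
      (fun n => (Matrix.of fun j k => g n j * w n k : Matrix (Fin J) (Fin K) ℝ)) =
      (Matrix.of fun n i => rowMap g n (w n) i)ᵀ := by
    ext i n
    simp [matBasis, Module.Basis.toMatrix_apply, rowMap, matFlat, Matrix.transpose_apply,
      Module.Basis.ofEquivFun_repr_apply]
  rw [h1, ← Matrix.det_transpose, h2, Matrix.transpose_transpose]

end Alg

section Alg2
variable {J K : ℕ}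

lemma chosen_li (g : Fin (J * K) → Fin J → ℝ)
    (hgen : ∀ v : Fin J → Fin J → ℝ, (∀ i, ∃ n, v i = g n) →
      Function.Injective v → LinearIndependent ℝ v)
    (τ : Fin J × Fin K ≃ Fin (J * K))
    (hτ : ∀ (k : Fin K) (i₁ i₂ : Fin J), g (τ (i₁, k)) = g (τ (i₂, k)) → i₁ = i₂) :
    LinearIndependent ℝ (fun n : Fin (J * K) =>
      (Matrix.of fun j k => g n j * (Pi.single ((τ.symm n).2) 1 : Fin K → ℝ) k :
        Matrix (Fin J) (Fin K) ℝ)) := by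
  classical
  rw [Fintype.linearIndependent_iff]
  intro c hc n
  have hcol : ∀ (k : Fin K) (j : Fin J), ∑ i : Fin J, c (τ (i, k)) * g (τ (i, k)) j = 0 := by
    intro k j
    have h1 : ∑ m : Fin (J * K),
        c m * (g m j * (Pi.single ((τ.symm m).2) 1 : Fin K → ℝ) k) = 0 := by
      have h0 := congrFun (congrFun hc j) k
      simpa [Matrix.sum_apply, Finset.sum_apply, Matrix.of_apply, Pi.smul_apply, smul_eq_mul, mul_assoc] using h0
    have h2 := Equiv.sum_comp τ (fun m : Fin (J * K) =>
      c m * (g m j * (Pi.single ((τ.symm m).2) 1 : Fin K → ℝ) k))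
    rw [h1] at h2
    rw [Fintype.sum_prod_type] at h2
    have h3 : ∀ (i : Fin J) (k' : Fin K),
        c (τ (i, k')) * (g (τ (i, k')) j * (Pi.single ((τ.symm (τ (i, k'))).2) 1 : Fin K → ℝ) k)
          = if k' = k then c (τ (i, k)) * g (τ (i, k)) j else 0 := by
      intro i k'
      rw [Equiv.symm_apply_apply]
      by_cases h : k' = k
      · subst h; simp [Pi.single_apply]
      · simp [Pi.single_apply, h]
    simp only [h3, Finset.sum_ite_eq', Finset.mem_univ, if_true] at h2
    exact h2
  have hcols : ∀ (k : Fin K) (i : Fin J), c (τ (i, k)) = 0 := by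
    intro k
    have hv : LinearIndependent ℝ (fun i : Fin J => g (τ (i, k))) := by
      refine hgen _ (fun i => ⟨τ (i, k), rfl⟩) ?_
      intro i₁ i₂ h
      exact hτ k i₁ i₂ h
    rw [Fintype.linearIndependent_iff] at hv
    refine hv (fun i => c (τ (i, k))) ?_
    funext j
    have := hcol k j
    simpa [Finset.sum_apply, smul_eq_mul] using this
  have := hcols (τ.symm n).2 (τ.symm n).1
  rwa [Prod.mk.eta, Equiv.apply_symm_apply] at this

lemma not_li_of_big (g : Fin (J * K) → Fin J → ℝ) (f : Fin K → ℝ → ℝ)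
    (t : Fin (J * K) → ℝ) (a : Fin J → ℝ)
    (hbig : K + 1 ≤ {n : Fin (J * K) | g n = a}.ncard) :
    ¬ LinearIndependent ℝ (fun n : Fin (J * K) =>
      (Matrix.of fun j k => g n j * f k (t n) : Matrix (Fin J) (Fin K) ℝ)) := by
  classical
  intro hli
  set s := {n : Fin (J * K) | g n = a} with hs
  have hsub : LinearIndependent ℝ (fun n : s =>
      (Matrix.of fun j k => g n.1 j * f k (t n.1) : Matrix (Fin J) (Fin K) ℝ)) :=
    hli.comp _ Subtype.val_injective
  set L : (Fin K → ℝ) →ₗ[ℝ] Matrix (Fin J) (Fin K) ℝ :=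
    { toFun := fun v => Matrix.of fun j k => a j * v k
      map_add' := fun x y => by ext j k; simp [mul_add]
      map_smul' := fun cc x => by ext j k; simp [smul_eq_mul]; ring } with hL
  have hmem : ∀ n : s,
      (Matrix.of fun j k => g n.1 j * f k (t n.1) : Matrix (Fin J) (Fin K) ℝ) ∈
        LinearMap.range L := by
    intro n
    refine ⟨fun k => f k (t n.1), ?_⟩
    have hga : g n.1 = a := n.2
    ext j k
    simp [hL, hga]
  have hli2 : LinearIndependent ℝ (fun n : s =>
      (⟨_, hmem n⟩ : LinearMap.range L)) := by
    apply LinearIndependent.of_comp (LinearMap.range L).subtype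
    exact hsub
  haveI : Fintype s := s.toFinite.fintype
  have hcard1 : Fintype.card s ≤ Module.finrank ℝ (LinearMap.range L) :=
    hli2.fintype_card_le_finrank
  have hcard2 : Module.finrank ℝ (LinearMap.range L) ≤ Module.finrank ℝ (Fin K → ℝ) :=
    LinearMap.finrank_range_le L
  have hcard3 : Module.finrank ℝ (Fin K → ℝ) = K := Module.finrank_fin_fun ℝ
  have hcard4 : s.ncard = Fintype.card s := by
    rw [Set.ncard_eq_toFinset_card', Set.toFinset_card]
  rw [hcard4] at hbig
  omega
end Alg2

/-- **Theorem 1 (Basis of Bilinear Measurements), equivalence form.**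
Let `N = J*K`, let `f₀, …, f_{K-1}` be an admissible function family (measurable,
linearly independent, every nonzero linear combination vanishes only on a null set),
and let `g₀, …, g_{N-1} ∈ ℝ^J` be in general position (any `J` pairwise-distinct
values among them are linearly independent).  Then no value occurs more than `K`
times among the `gₙ` **iff** the set of time tuples for which the rank-one matrices
`gₙ f(tₙ)ᵀ` fail to be a basis of `ℝ^{J×K}` is Lebesgue-null. -/
theorem bilinear_measurements_basis_iff (J K : ℕ) (hJ : 1 ≤ J) (hK : 1 ≤ K)
    (f : Fin K → ℝ → ℝ)
    (hmeas : ∀ k, Measurable (f k))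
    (hli : LinearIndependent ℝ f)
    (hzero : ∀ c : Fin K → ℝ, c ≠ 0 →
      volume {t : ℝ | ∑ k, c k * f k t = 0} = 0)
    (g : Fin (J * K) → Fin J → ℝ)
    (hgen : ∀ v : Fin J → Fin J → ℝ, (∀ i, ∃ n, v i = g n) →
      Function.Injective v → LinearIndependent ℝ v) :
    (∀ a : Fin J → ℝ, {n : Fin (J * K) | g n = a}.ncard ≤ K) ↔
      volume {t : Fin (J * K) → ℝ |
        ¬ (LinearIndependent ℝ
              (fun n : Fin (J * K) =>
                (Matrix.of fun (j : Fin J) (k : Fin K) => g n j * f k (t n) :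
                  Matrix (Fin J) (Fin K) ℝ)) ∧
            Submodule.span ℝ
              (Set.range (fun n : Fin (J * K) =>
                (Matrix.of fun (j : Fin J) (k : Fin K) => g n j * f k (t n) :
                  Matrix (Fin J) (Fin K) ℝ))) = ⊤)} = 0 := by
  classical
  have hNpos : 0 < J * K := Nat.mul_pos hJ hK
  have hcardeq : Fintype.card (Fin (J * K)) =
      Module.finrank ℝ (Matrix (Fin J) (Fin K) ℝ) := by
    rw [Module.finrank_eq_card_basis (matBasis (J := J) (K := K))]
  have hset : ∀ t : Fin (J * K) → ℝ,
      (¬ (LinearIndependent ℝ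
              (fun n : Fin (J * K) =>
                (Matrix.of fun (j : Fin J) (k : Fin K) => g n j * f k (t n) :
                  Matrix (Fin J) (Fin K) ℝ)) ∧
            Submodule.span ℝ
              (Set.range (fun n : Fin (J * K) =>
                (Matrix.of fun (j : Fin J) (k : Fin K) => g n j * f k (t n) :
                  Matrix (Fin J) (Fin K) ℝ))) = ⊤)) ↔
        detMap g (fun n k => f k (t n)) = 0 := by
    intro t
    rw [Module.Basis.is_basis_iff_det matBasis, isUnit_iff_ne_zero, not_ne_iff]
    rw [← matBasis_det_eq g (fun n k => f k (t n))]
  constructor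
  · intro hcard
    obtain ⟨τ, hτ⟩ := exists_assignment g hcard
    have hliM := chosen_li g hgen τ hτ
    have hspan := hliM.span_eq_top_of_card_eq_finrank' hcardeq
    have hunit := (Module.Basis.is_basis_iff_det matBasis).1 ⟨hliM, hspan⟩
    have hMne : detMap g ≠ 0 := by
      intro h0
      have hdet := matBasis_det_eq g (fun n => (Pi.single ((τ.symm n).2) 1 : Fin K → ℝ))
      rw [h0] at hdet
      simp only [MultilinearMap.zero_apply] at hdet
      exact isUnit_iff_ne_zero.1 hunit hdet
    have hnull := key_null hmeas hzero (J * K) (detMap g) hMne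
    have : {t : Fin (J * K) → ℝ |
        ¬ (LinearIndependent ℝ
              (fun n : Fin (J * K) =>
                (Matrix.of fun (j : Fin J) (k : Fin K) => g n j * f k (t n) :
                  Matrix (Fin J) (Fin K) ℝ)) ∧
            Submodule.span ℝ
              (Set.range (fun n : Fin (J * K) =>
                (Matrix.of fun (j : Fin J) (k : Fin K) => g n j * f k (t n) :
                  Matrix (Fin J) (Fin K) ℝ))) = ⊤)} =
        {t : Fin (J * K) → ℝ | detMap g (fun n k => f k (t n)) = 0} := by
      ext t
      exact hset t
    rw [this]
    exact hnull
  · intro hvol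
    by_contra hcard
    push_neg at hcard
    obtain ⟨a, ha⟩ := hcard
    have huniv : {t : Fin (J * K) → ℝ |
        ¬ (LinearIndependent ℝ
              (fun n : Fin (J * K) =>
                (Matrix.of fun (j : Fin J) (k : Fin K) => g n j * f k (t n) :
                  Matrix (Fin J) (Fin K) ℝ)) ∧
            Submodule.span ℝ
              (Set.range (fun n : Fin (J * K) =>
                (Matrix.of fun (j : Fin J) (k : Fin K) => g n j * f k (t n) :
                  Matrix (Fin J) (Fin K) ℝ))) = ⊤)} = Set.univ := by
      ext t
      simp only [Set.mem_setOf_eq, Set.mem_univ, iff_true]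
      rintro ⟨h1, -⟩
      exact not_li_of_big g f t a (by omega) h1
    rw [huniv] at hvol
    have hvol2 : (volume : Measure (Fin (J * K) → ℝ)) Set.univ = ⊤ := by
      rw [MeasureTheory.volume_pi, MeasureTheory.Measure.pi_univ]
      simp only [Real.volume_univ, Finset.prod_const, Finset.card_univ, Fintype.card_fin]
      exact ENNReal.top_pow hNpos.ne'
    rw [hvol2] at hvol
    exact ENNReal.top_ne_zero hvol
end

section
/- Let J, K ≥ 1 and N = JK. Let f_0,…,f_{K−1} : ℝ → ℝ a be an admissible function family and write f(t) = (f_0(t),…,f_{K−1}(t)) ∈ ℝ^K. Let g_0,…,g_{N−1} ∈ ℝ^J be vectors in general position such that no vector value occurs more than K times among g_0,…,g_{N−1}. Then for Lebesgue-almost every (t_0,…,t_{N−1}) ∈ ℝ^N, the N matrices g_n f(t_n)ᵀ form a basis of ℝ^{J×K}; equivalently, the JK×JK matrix whose n-th row is vec(g_n f(t_n)ᵀ) has nonzero determinant. -/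
open MeasureTheory

private lemma multilin_null' {K : ℕ} (f : Fin K → ℝ → ℝ) (hmeas : ∀ k, Measurable (f k))
    (hzero : ∀ c : Fin K → ℝ, c ≠ 0 → volume {t : ℝ | ∑ k, c k * f k t = 0} = 0) :
    ∀ (N : ℕ) (φ : (Fin N → Fin K) → ℝ), φ ≠ 0 →
      volume {t : Fin N → ℝ | ∑ α : Fin N → Fin K, φ α * ∏ n, f (α n) (t n) = 0} = 0 := by
  intro N
  induction N with
  | zero =>
    intro φ hφ
    have h0 : ∀ t : Fin 0 → ℝ,
        (∑ α : Fin 0 → Fin K, φ α * ∏ n, f (α n) (t n)) ≠ 0 := by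
      intro t
      have h1 : (∑ α : Fin 0 → Fin K, φ α * ∏ n, f (α n) (t n)) = φ finZeroElim := by
        rw [Fintype.sum_unique]; simp; congr
      rw [h1]
      intro h
      apply hφ
      funext β
      have hb : β = finZeroElim := funext fun i => i.elim0
      rw [hb, h]; rfl
    have : {t : Fin 0 → ℝ | ∑ α : Fin 0 → Fin K, φ α * ∏ n, f (α n) (t n) = 0} = ∅ := by
      ext t
      simp only [Set.mem_setOf_eq, Set.mem_empty_iff_false, iff_false]
      exact h0 t
    rw [this]; simp
  | succ N IH =>
    intro φ hφ
    -- the slice coefficient function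
    set φx : ℝ → (Fin N → Fin K) → ℝ := fun x β => ∑ k, f k x * φ (Fin.cons k β) with hφx
    set F' : ℝ × (Fin N → ℝ) → ℝ :=
      fun p => ∑ β : Fin N → Fin K, φx p.1 β * ∏ n, f (β n) (p.2 n) with hF'
    have hmeasF' : Measurable F' := by
      apply Finset.measurable_sum
      intro β _
      apply Measurable.mul
      · apply Finset.measurable_sum
        intro k _
        exact ((hmeas k).comp measurable_fst).mul_const _
      · apply Finset.measurable_prod
        intro n _
        exact (hmeas (β n)).comp ((measurable_pi_apply n).comp measurable_snd)
    have hB' : MeasurableSet {p : ℝ × (Fin N → ℝ) | F' p = 0} :=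
      hmeasF' (measurableSet_singleton 0)
    -- slices are null a.e.
    obtain ⟨α₀, hα₀⟩ : ∃ α₀, φ α₀ ≠ 0 := by
      by_contra h
      push_neg at h
      exact hφ (funext fun α => h α)
    set β₀ : Fin N → Fin K := Fin.tail α₀ with hβ₀
    set c : Fin K → ℝ := fun k => φ (Fin.cons k β₀) with hc
    have hcne : c ≠ 0 := by
      intro h
      apply hα₀
      have := congrFun h (α₀ 0)
      simpa [hc, hβ₀, Fin.cons_self_tail] using this
    have hxa : ∀ᵐ x : ℝ ∂volume, ∑ k, c k * f k x ≠ 0 := by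
      rw [ae_iff]
      simpa using hzero c hcne
    have hslice : ∀ᵐ x : ℝ ∂volume,
        volume (Prod.mk x ⁻¹' {p : ℝ × (Fin N → ℝ) | F' p = 0}) = 0 := by
      filter_upwards [hxa] with x hx
      have hφxne : φx x ≠ 0 := by
        intro h
        apply hx
        have := congrFun h β₀
        simp only [hφx, Pi.zero_apply] at this
        rw [← this]
        exact Finset.sum_congr rfl fun k _ => mul_comm _ _
      have := IH (φx x) hφxne
      convert this using 2
      rfl
    have hprod : ((volume : Measure ℝ).prod (volume : Measure (Fin N → ℝ)))
        {p : ℝ × (Fin N → ℝ) | F' p = 0} = 0 :=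
      (Measure.measure_prod_null hB').mpr hslice
    -- transfer via the measurable equiv
    have hmp := measurePreserving_piFinSuccAbove (fun _ : Fin (N + 1) => (volume : Measure ℝ)) 0
    have key : {t : Fin (N+1) → ℝ | ∑ α : Fin (N+1) → Fin K, φ α * ∏ n, f (α n) (t n) = 0}
        = (MeasurableEquiv.piFinSuccAbove (fun _ : Fin (N+1) => ℝ) 0) ⁻¹'
          {p : ℝ × (Fin N → ℝ) | F' p = 0} := by
      ext t
      simp only [Set.mem_setOf_eq, Set.mem_preimage]
      have ht : (MeasurableEquiv.piFinSuccAbove (fun _ : Fin (N+1) => ℝ) 0) t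
          = (t 0, fun j => t (Fin.succAbove 0 j)) := rfl
      rw [ht]
      have expand : ∑ α : Fin (N+1) → Fin K, φ α * ∏ n, f (α n) (t n)
          = F' (t 0, fun j => t (Fin.succAbove 0 j)) := by
        rw [hF']
        simp only [hφx]
        rw [← Equiv.sum_comp (Fin.consEquiv (fun _ : Fin (N+1) => Fin K))
          (fun α => φ α * ∏ n, f (α n) (t n))]
        rw [Fintype.sum_prod_type]
        rw [Finset.sum_comm]
        refine Finset.sum_congr rfl fun β _ => ?_
        rw [Finset.sum_mul]
        refine Finset.sum_congr rfl fun k _ => ?_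
        have hc0 : (Fin.consEquiv (fun _ : Fin (N+1) => Fin K)) (k, β) = Fin.cons k β := rfl
        rw [hc0, Fin.prod_univ_succ]
        simp only [Fin.cons_zero, Fin.cons_succ]
        simp only [show ∀ j : Fin N, Fin.succAbove 0 j = j.succ from fun j => rfl]
        ring
      rw [expand]
    rw [key]
    rw [show (volume : Measure (Fin (N+1) → ℝ)) = Measure.pi fun _ => volume from volume_pi]
    rw [hmp.measure_preimage hB'.nullMeasurableSet]
    exact hprod

private lemma mod_fiber_card' {J K : ℕ} (hK : 1 ≤ K) (k : Fin K) :
    (Finset.univ.filter (fun i : Fin (J * K) => (i : ℕ) % K = (k : ℕ))).card = J := by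
  apply Finset.card_eq_of_bijective
    (f := fun q hq => (⟨q * K + (k : ℕ), by
      calc q * K + (k : ℕ) < q * K + K := by omega
        _ = (q + 1) * K := by ring
        _ ≤ J * K := Nat.mul_le_mul_right K (by omega)⟩ : Fin (J * K)))
  · intro a ha
    simp only [Finset.mem_filter, Finset.mem_univ, true_and] at ha
    refine ⟨(a : ℕ) / K, (Nat.div_lt_iff_lt_mul (by omega)).mpr a.isLt, ?_⟩
    apply Fin.ext
    simp only
    rw [← ha]
    have h1 := Nat.div_add_mod (a : ℕ) K
    have h2 : (a : ℕ) / K * K = K * ((a : ℕ) / K) := Nat.mul_comm _ _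
    omega
  · intro q hq
    simp only [Finset.mem_filter, Finset.mem_univ, true_and]
    rw [Nat.add_comm, Nat.add_mul_mod_self_right, Nat.mod_eq_of_lt k.isLt]
  · intro q q' hq hq' h
    have h1 : q * K + (k : ℕ) = q' * K + (k : ℕ) := congrArg Fin.val h
    have h2 : q * K = q' * K := by omega
    exact Nat.eq_of_mul_eq_mul_right (by omega) h2

private lemma exists_coloring' {J K : ℕ} (hK : 1 ≤ K) (g : Fin (J * K) → Fin J → ℝ)
    (hrep : ∀ a : Fin J → ℝ, {n : Fin (J * K) | g n = a}.ncard ≤ K) :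
    ∃ α : Fin (J * K) → Fin K,
      (∀ k, (Finset.univ.filter (fun n => α n = k)).card = J) ∧
      (∀ k, Set.InjOn g {n | α n = k}) := by
  classical
  -- representative: least index with the same g-value
  set r : Fin (J * K) → Fin (J * K) := fun n =>
    (Finset.univ.filter (fun m => g m = g n)).min'
      ⟨n, by simp⟩ with hr
  have hgr : ∀ n, g (r n) = g n := by
    intro n
    have := (Finset.univ.filter (fun m => g m = g n)).min'_mem
      ⟨n, by simp⟩
    simpa [hr] using (Finset.mem_filter.mp this).2
  have hreq : ∀ {n m}, g n = g m → r n = r m := by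
    intro n m h
    simp only [hr, h]
  set σ : Equiv.Perm (Fin (J * K)) := Tuple.sort r with hσ
  have hmono : Monotone (r ∘ σ) := Tuple.monotone_sort r
  set α : Fin (J * K) → Fin K := fun n =>
    ⟨(σ.symm n : ℕ) % K, Nat.mod_lt _ (by omega)⟩ with hα
  have hfilt : ∀ k : Fin K, Finset.univ.filter (fun n => α n = k)
      = (Finset.univ.filter (fun i : Fin (J * K) => (i : ℕ) % K = (k : ℕ))).image σ := by
    intro k
    ext n
    simp only [Finset.mem_filter, Finset.mem_univ, true_and, Finset.mem_image]
    constructor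
    · intro h
      exact ⟨σ.symm n, by simpa [hα, Fin.ext_iff] using congrArg Fin.val h, by simp⟩
    · rintro ⟨i, hi, rfl⟩
      apply Fin.ext
      simpa [hα] using hi
  have hcard : ∀ k : Fin K, (Finset.univ.filter (fun n => α n = k)).card = J := by
    intro k
    rw [hfilt k, Finset.card_image_of_injective _ σ.injective]
    exact mod_fiber_card' hK k
  refine ⟨α, hcard, ?_⟩
  -- injectivity on fibers
  have key : ∀ n₁ n₂ : Fin (J * K), α n₁ = α n₂ → g n₁ = g n₂ →
      ((σ.symm n₁ : ℕ) < (σ.symm n₂ : ℕ)) → False := by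
    intro n₁ n₂ hα12 hg12 hlt
    set i₁ := σ.symm n₁
    set i₂ := σ.symm n₂
    have hmod : (i₁ : ℕ) % K = (i₂ : ℕ) % K := by
      have := congrArg Fin.val hα12
      simpa [hα] using this
    have hdvd : K ∣ (i₂ : ℕ) - (i₁ : ℕ) := by
      have : (i₁ : ℕ) ≡ (i₂ : ℕ) [MOD K] := hmod
      exact (Nat.modEq_iff_dvd' (le_of_lt hlt)).mp this
    have hKle : (i₁ : ℕ) + K ≤ (i₂ : ℕ) := by
      have hpos : 0 < (i₂ : ℕ) - (i₁ : ℕ) := by omega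
      have := Nat.le_of_dvd hpos hdvd
      omega
    -- all σ i for i ∈ [i₁, i₂] have the same g-value
    have hsame : ∀ i : Fin (J * K), i₁ ≤ i → i ≤ i₂ → g (σ i) = g n₁ := by
      intro i h1 h2
      have hr12 : r n₁ = r n₂ := hreq hg12
      have e1 : r (σ i₁) = r n₁ := by rw [Equiv.apply_symm_apply]
      have e2 : r (σ i₂) = r n₂ := by rw [Equiv.apply_symm_apply]
      have hle1 : r (σ i₁) ≤ r (σ i) := hmono h1
      have hle2 : r (σ i) ≤ r (σ i₂) := hmono h2
      have : r (σ i) = r n₁ := by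
        apply le_antisymm
        · rw [hr12, ← e2]; exact hle2
        · rw [← e1]; exact hle1
      calc g (σ i) = g (r (σ i)) := (hgr _).symm
        _ = g (r n₁) := by rw [this]
        _ = g n₁ := hgr n₁
    -- so the fiber of g n₁ has at least K + 1 elements
    have hsub : (Finset.Icc i₁ i₂).image σ ⊆ Finset.univ.filter (fun m => g m = g n₁) := by
      intro m hm
      simp only [Finset.mem_image, Finset.mem_Icc] at hm
      obtain ⟨i, ⟨h1, h2⟩, rfl⟩ := hm
      simp only [Finset.mem_filter, Finset.mem_univ, true_and]
      exact hsame i h1 h2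
    have hcard1 : ((Finset.Icc i₁ i₂).image σ).card = (i₂ : ℕ) + 1 - (i₁ : ℕ) := by
      rw [Finset.card_image_of_injective _ σ.injective, Fin.card_Icc]
    have hbig : K + 1 ≤ (Finset.univ.filter (fun m => g m = g n₁)).card := by
      have := Finset.card_le_card hsub
      omega
    have hsmall : (Finset.univ.filter (fun m => g m = g n₁)).card ≤ K := by
      have h1 : {n : Fin (J * K) | g n = g n₁}
          = ↑(Finset.univ.filter (fun m => g m = g n₁)) := by ext m; simp
      have := hrep (g n₁)
      rw [h1, Set.ncard_coe_finset] at this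
      exact this
    omega
  intro k n₁ hn₁ n₂ hn₂ hg12
  simp only [Set.mem_setOf_eq] at hn₁ hn₂
  by_contra hne
  rcases lt_trichotomy ((σ.symm n₁ : ℕ)) ((σ.symm n₂ : ℕ)) with h | h | h
  · exact key n₁ n₂ (hn₁.trans hn₂.symm) hg12 h
  · exact hne (by
      have : σ.symm n₁ = σ.symm n₂ := Fin.ext h
      simpa using congrArg σ this)
  · exact key n₂ n₁ (hn₂.trans hn₁.symm) hg12.symm h

/-- **Sufficiency direction of Theorem 1 (Basis of Bilinear Measurements).**
If `f₀, …, f_{K-1}` is an admissible function family, the vectors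
`g₀, …, g_{JK-1} ∈ ℝ^J` are in general position and no value occurs more than
`K` times among them, then for Lebesgue-almost every tuple of sampling times the
`JK` rank-one matrices `gₙ f(tₙ)ᵀ` form a basis of `ℝ^{J×K}`. -/
theorem bilinear_measurements_basis_ae (J K : ℕ) (hJ : 1 ≤ J) (hK : 1 ≤ K)
    (f : Fin K → ℝ → ℝ)
    (hmeas : ∀ k, Measurable (f k))
    (hli : LinearIndependent ℝ f)
    (hzero : ∀ c : Fin K → ℝ, c ≠ 0 →
      volume {t : ℝ | ∑ k, c k * f k t = 0} = 0)
    (g : Fin (J * K) → Fin J → ℝ)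
    (hgen : ∀ v : Fin J → Fin J → ℝ, (∀ i, ∃ n, v i = g n) →
      Function.Injective v → LinearIndependent ℝ v)
    (hrep : ∀ a : Fin J → ℝ, {n : Fin (J * K) | g n = a}.ncard ≤ K) :
    ∀ᵐ t : Fin (J * K) → ℝ ∂volume,
      LinearIndependent ℝ
          (fun n : Fin (J * K) =>
            (Matrix.of fun (j : Fin J) (k : Fin K) => g n j * f k (t n) :
              Matrix (Fin J) (Fin K) ℝ)) ∧
        Submodule.span ℝ
            (Set.range (fun n : Fin (J * K) =>
              (Matrix.of fun (j : Fin J) (k : Fin K) => g n j * f k (t n) :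
                Matrix (Fin J) (Fin K) ℝ))) = ⊤ := by
  classical
  haveI : Nonempty (Fin (J * K)) := ⟨⟨0, Nat.mul_pos hJ hK⟩⟩
  set b : Module.Basis (Fin (J * K)) ℝ (Matrix (Fin J) (Fin K) ℝ) :=
    (Matrix.stdBasis ℝ (Fin J) (Fin K)).reindex finProdFinEquiv with hb
  set w : Fin (J * K) → Fin K → Matrix (Fin J) (Fin K) ℝ :=
    fun n k => Matrix.of fun j k' => g n j * (if k' = k then 1 else 0) with hw
  set Φ : (Fin (J * K) → Fin K) → ℝ := fun α => b.det (fun n => w n (α n)) with hΦ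
  -- the coefficient at the coloring α₀ is nonzero
  obtain ⟨α₀, hcardα, hinjα⟩ := exists_coloring' hK g hrep
  have cardeq : Fintype.card (Fin (J * K)) = Module.finrank ℝ (Matrix (Fin J) (Fin K) ℝ) := by
    simp [Module.finrank_matrix]
  have LIw : LinearIndependent ℝ (fun n => w n (α₀ n)) := by
    rw [Fintype.linearIndependent_iff]
    intro c hc
    have hfib : ∀ (k : Fin K) (j : Fin J),
        ∑ m ∈ Finset.univ.filter (fun m => α₀ m = k), c m * g m j = 0 := by
      intro k j
      have h2 : (∑ n, c n • w n (α₀ n)) j k = 0 := by rw [hc]; rfl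
      rw [Matrix.sum_apply] at h2
      have h3 : ∀ m : Fin (J * K), (c m • w m (α₀ m)) j k
          = if α₀ m = k then c m * g m j else 0 := by
        intro m
        have he : (c m • w m (α₀ m)) j k
            = c m * (g m j * if k = α₀ m then 1 else 0) := rfl
        rw [he]
        by_cases h : α₀ m = k
        · simp [h]
        · have hne : ¬ (k = α₀ m) := fun hh => h hh.symm
          simp [hne, h]
      calc ∑ m ∈ Finset.univ.filter (fun m => α₀ m = k), c m * g m j
          = ∑ m, (c m • w m (α₀ m)) j k := by
            rw [Finset.sum_filter]
            exact Finset.sum_congr rfl fun m _ => (h3 m).symm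
        _ = 0 := h2
    intro n
    set k := α₀ n
    set s := Finset.univ.filter (fun m => α₀ m = k) with hs
    have hns : n ∈ s := by simp [hs, k]
    set ek : {x // x ∈ s} ≃ Fin J := Finset.equivFinOfCardEq (hcardα k) with hek
    set v : Fin J → Fin J → ℝ := fun i => g ((ek.symm i : {x // x ∈ s}) : Fin (J * K)) with hv
    have hv1 : ∀ i, ∃ m, v i = g m := fun i => ⟨_, rfl⟩
    have hv2 : Function.Injective v := by
      intro i i' h
      have m1 := (ek.symm i).2
      have m2 := (ek.symm i').2
      simp only [hs, Finset.mem_filter, Finset.mem_univ, true_and] at m1 m2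
      have : ((ek.symm i : {x // x ∈ s}) : Fin (J * K))
          = ((ek.symm i' : {x // x ∈ s}) : Fin (J * K)) :=
        hinjα k m1 m2 h
      exact ek.symm.injective (Subtype.ext this)
    have LIv := hgen v hv1 hv2
    have hsum : ∑ i : Fin J, c ((ek.symm i : {x // x ∈ s}) : Fin (J * K)) • v i
        = (0 : Fin J → ℝ) := by
      funext j
      rw [Finset.sum_apply]
      have : ∀ i : Fin J, (c ((ek.symm i : {x // x ∈ s}) : Fin (J * K)) • v i) j
          = c ((ek.symm i : {x // x ∈ s}) : Fin (J * K))
            * g ((ek.symm i : {x // x ∈ s}) : Fin (J * K)) j := fun i => rfl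
      simp only [this]
      simp only [Pi.zero_apply]
      rw [Equiv.sum_comp ek.symm (fun x : {x // x ∈ s} => c (x : Fin (J * K)) * g (x : Fin (J * K)) j)]
      rw [Finset.sum_coe_sort s (fun m => c m * g m j)]
      exact hfib k j
    have hz := Fintype.linearIndependent_iff.mp LIv _ hsum
    have : c ((ek.symm (ek ⟨n, hns⟩) : {x // x ∈ s}) : Fin (J * K)) = 0 := hz (ek ⟨n, hns⟩)
    simpa using this
  have hΦ0 : Φ α₀ ≠ 0 := by
    set b' := basisOfLinearIndependentOfCardEqFinrank LIw cardeq with hb'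
    have hcoe : ⇑b' = fun n => w n (α₀ n) :=
      coe_basisOfLinearIndependentOfCardEqFinrank LIw cardeq
    have : Φ α₀ = b.det b' := by rw [hΦ, hcoe]
    rw [this]
    exact (b.isUnit_det b').ne_zero
  have hΦne : Φ ≠ 0 := fun h => hΦ0 (by rw [h]; rfl)
  -- determinant expansion
  have hexp : ∀ t : Fin (J * K) → ℝ,
      b.det (fun n => (Matrix.of fun (j : Fin J) (k : Fin K) => g n j * f k (t n) :
          Matrix (Fin J) (Fin K) ℝ))
        = ∑ α : Fin (J * K) → Fin K, Φ α * ∏ n, f (α n) (t n) := by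
    intro t
    have h1 : (fun n => (Matrix.of fun (j : Fin J) (k : Fin K) => g n j * f k (t n) :
        Matrix (Fin J) (Fin K) ℝ)) = fun n => ∑ k, f k (t n) • w n k := by
      funext n
      ext j k'
      rw [Matrix.sum_apply]
      have : ∀ k : Fin K, (f k (t n) • w n k) j k'
          = (if k' = k then f k (t n) * g n j else 0) := by
        intro k
        by_cases h : k' = k <;> simp [hw, h]
      simp only [this]
      rw [Finset.sum_ite_eq Finset.univ k' (fun k => f k (t n) * g n j)]
      simp [mul_comm]
    rw [h1]
    rw [show (b.det fun n => ∑ k, f k (t n) • w n k)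
        = b.det.toMultilinearMap (fun n => ∑ k, f k (t n) • w n k) from rfl]
    rw [b.det.toMultilinearMap.map_sum (g := fun n k => f k (t n) • w n k)]
    refine Finset.sum_congr rfl fun α _ => ?_
    rw [show (b.det.toMultilinearMap fun n => f (α n) (t n) • w n (α n))
        = b.det.toMultilinearMap ((fun n => (f (α n) (t n)) • (fun m => w m (α m)) n)) from rfl]
    rw [MultilinearMap.map_smul_univ]
    simp [hΦ, mul_comm]
  -- conclusion
  have hnull := multilin_null' f hmeas hzero (J * K) Φ hΦne
  rw [ae_iff]
  refine measure_mono_null ?_ hnull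
  intro t ht
  simp only [Set.mem_setOf_eq] at ht ⊢
  by_contra hne
  apply ht
  have hdet : b.det (fun n => (Matrix.of fun (j : Fin J) (k : Fin K) => g n j * f k (t n) :
      Matrix (Fin J) (Fin K) ℝ)) ≠ 0 := by
    rw [hexp t]; exact hne
  exact (Module.Basis.is_basis_iff_det b).mpr (isUnit_iff_ne_zero.mpr hdet)
end

section
/- Let J, K ≥ 1, N = JK, and let M ∈ ℝ^{N×N}. For permutations σ, π of {0,…,N−1} declare σ ∼_J π iff for every k < K the sets {σ(Jk+j) : 0 ≤ j < J} and {π(Jk+j) : 0 ≤ j < J} are equal; this is an equivalence relation on the symmetric group. For a permutation σ and k < K, let M_{σ,k} denote the J×J submatrix of M formed by rows Jk, Jk+1, …, J(k+1)−1 and columns σ(Jk), σ(Jk+1), …, σ(J(k+1)−1) (in that order). Then the quantity sgn(σ)·∏_{k=0}^{K−1} det(M_{σ,k}) depends only on the ∼_J-equivalence class of σ, and det(M) = Σ_{[σ] ∈ P_N/∼_J} sgn(σ*)·∏_{k=0}^{K−1} det(M_{σ*,k}), where the sum ranges over the equivalence classes and σ* is any representative of the class [σ]. -/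
open MeasureTheory

/-- The index `J*k + j` of `Fin (J*K)`, for `k < K` and `j < J`. -/
def blockIdx (J K : ℕ) (k : Fin K) (j : Fin J) : Fin (J * K) :=
  ⟨J * k + j, by
    have h1 : J * (k : ℕ) + (j : ℕ) < J * ((k : ℕ) + 1) := by
      rw [Nat.mul_succ]; exact Nat.add_lt_add_left j.isLt _
    exact lt_of_lt_of_le h1 (Nat.mul_le_mul le_rfl k.isLt)⟩

/-- The relation `σ ∼_J π`: for every `k < K`, the sets
`{σ(Jk+j) : j < J}` and `{π(Jk+j) : j < J}` coincide. -/
def permBlockRel (J K : ℕ) (σ π : Equiv.Perm (Fin (J * K))) : Prop :=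
  ∀ k : Fin K,
    Finset.image (fun j : Fin J => σ (blockIdx J K k j)) Finset.univ =
      Finset.image (fun j : Fin J => π (blockIdx J K k j)) Finset.univ

/-- The summand `sgn(σ) ⋅ ∏_{k<K} det(M_{σ,k})`, where `M_{σ,k}` is the `J×J`
submatrix of `M` with rows `Jk, …, J(k+1)-1` and columns `σ(Jk), …, σ(J(k+1)-1)`. -/
noncomputable def permBlockTerm (J K : ℕ) (M : Matrix (Fin (J * K)) (Fin (J * K)) ℝ)
    (σ : Equiv.Perm (Fin (J * K))) : ℝ :=
  ((Equiv.Perm.sign σ : ℤ) : ℝ) *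
    ∏ k : Fin K,
      Matrix.det (Matrix.of fun j j' : Fin J => M (blockIdx J K k j) (σ (blockIdx J K k j')))

namespace DetSplitAux

variable (J K : ℕ)

/-- Identification of `Fin K × Fin J` with `Fin (J*K)` matching `blockIdx`. -/
def blockEquiv : Fin K × Fin J ≃ Fin (J * K) :=
  finProdFinEquiv.trans (finCongr (Nat.mul_comm K J))

lemma blockEquiv_apply (k : Fin K) (j : Fin J) :
    blockEquiv J K (k, j) = blockIdx J K k j := by
  apply Fin.ext
  simp [blockEquiv, blockIdx, Nat.add_comm]

lemma blockIdx_right_inj {k : Fin K} {j j' : Fin J}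
    (h : blockIdx J K k j = blockIdx J K k j') : j = j' := by
  have := congrArg Fin.val h
  simp only [blockIdx] at this
  exact Fin.ext (by omega)

/-- The block-diagonal permutation associated to a family `τ`. -/
def blockPerm (τ : Fin K → Equiv.Perm (Fin J)) : Equiv.Perm (Fin (J * K)) :=
  (blockEquiv J K).permCongr (Equiv.prodCongrRight τ)

lemma blockPerm_apply (τ : Fin K → Equiv.Perm (Fin J)) (k : Fin K) (j : Fin J) :
    blockPerm J K τ (blockIdx J K k j) = blockIdx J K k (τ k j) := by
  rw [← blockEquiv_apply, ← blockEquiv_apply]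
  simp [blockPerm, Equiv.permCongr_apply, Equiv.prodCongrRight]

lemma sign_blockPerm (τ : Fin K → Equiv.Perm (Fin J)) :
    Equiv.Perm.sign (blockPerm J K τ) = ∏ k, Equiv.Perm.sign (τ k) := by
  simp [blockPerm, Equiv.Perm.sign_permCongr, Equiv.Perm.sign_prodCongrRight]

lemma rel_mul_blockPerm (σ : Equiv.Perm (Fin (J * K))) (τ : Fin K → Equiv.Perm (Fin J)) :
    permBlockRel J K σ (σ * blockPerm J K τ) := by
  intro k
  have : (fun j : Fin J => (σ * blockPerm J K τ) (blockIdx J K k j)) =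
      (fun j : Fin J => σ (blockIdx J K k j)) ∘ (τ k) := by
    funext j
    simp [Equiv.Perm.mul_apply, blockPerm_apply]
  rw [this, ← Finset.image_image, Finset.image_univ_equiv]

lemma exists_tau {σ π : Equiv.Perm (Fin (J * K))} (h : permBlockRel J K σ π) :
    ∃ τ : Fin K → Equiv.Perm (Fin J), π = σ * blockPerm J K τ := by
  have hmem : ∀ (k : Fin K) (j : Fin J), ∃ j' : Fin J,
      σ (blockIdx J K k j') = π (blockIdx J K k j) := by
    intro k j
    have : π (blockIdx J K k j) ∈
        Finset.image (fun j : Fin J => σ (blockIdx J K k j)) Finset.univ := by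
      rw [h k]; exact Finset.mem_image_of_mem _ (Finset.mem_univ j)
    simpa using this
  choose f hf using hmem
  have hinj : ∀ k, Function.Injective (f k) := by
    intro k j1 j2 hj
    have h1 : π (blockIdx J K k j1) = π (blockIdx J K k j2) := by
      rw [← hf k j1, ← hf k j2, hj]
    exact blockIdx_right_inj J K (π.injective h1)
  refine ⟨fun k => Equiv.ofBijective (f k) (Finite.injective_iff_bijective.mp (hinj k)), ?_⟩
  refine Equiv.ext fun i => ?_
  obtain ⟨⟨k, j⟩, rfl⟩ := (blockEquiv J K).surjective i
  rw [blockEquiv_apply, Equiv.Perm.mul_apply, blockPerm_apply]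
  exact (hf k j).symm

lemma blockPerm_inj : Function.Injective (blockPerm J K) := by
  intro τ τ' h
  funext k
  refine Equiv.ext fun j => ?_
  have := congrArg (fun p => p (blockIdx J K k j)) h
  simp only [blockPerm_apply] at this
  exact blockIdx_right_inj J K this

lemma det_eq_sum (n : ℕ) (A : Matrix (Fin n) (Fin n) ℝ) :
    A.det = ∑ σ : Equiv.Perm (Fin n), ((Equiv.Perm.sign σ : ℤ) : ℝ) * ∏ i, A i (σ i) := by
  rw [← Matrix.det_transpose, Matrix.det_apply']
  rfl

open scoped Classical in
/-- Core: the term of `σ` is the sum of Leibniz terms over the class of `σ`. -/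
lemma permBlockTerm_eq_sum (M : Matrix (Fin (J * K)) (Fin (J * K)) ℝ)
    (σ : Equiv.Perm (Fin (J * K))) :
    permBlockTerm J K M σ =
      ∑ π ∈ Finset.univ.filter (fun π => permBlockRel J K σ π),
        ((Equiv.Perm.sign π : ℤ) : ℝ) * ∏ i, M i (π i) := by
  have himg : Finset.univ.filter (fun π => permBlockRel J K σ π) =
      Finset.univ.image (fun τ : Fin K → Equiv.Perm (Fin J) => σ * blockPerm J K τ) := by
    ext π
    simp only [Finset.mem_filter, Finset.mem_univ, true_and, Finset.mem_image]
    constructor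
    · intro h
      obtain ⟨τ, rfl⟩ := exists_tau J K h
      exact ⟨τ, rfl⟩
    · rintro ⟨τ, rfl⟩
      exact rel_mul_blockPerm J K σ τ
  rw [himg, Finset.sum_image (by
    intro τ _ τ' _ h
    exact blockPerm_inj J K (mul_left_cancel h))]
  -- expand the LHS
  unfold permBlockTerm
  simp_rw [det_eq_sum J]
  rw [Finset.prod_univ_sum]
  rw [Finset.mul_sum]
  rw [Fintype.piFinset_univ]
  apply Finset.sum_congr rfl
  intro τ _
  have hsign : ((Equiv.Perm.sign (σ * blockPerm J K τ) : ℤ) : ℝ) =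
      ((Equiv.Perm.sign σ : ℤ) : ℝ) * ∏ k, ((Equiv.Perm.sign (τ k) : ℤ) : ℝ) := by
    rw [map_mul, sign_blockPerm]
    push_cast
    rfl
  have hprod : (∏ i, M i ((σ * blockPerm J K τ) i)) =
      ∏ k, ∏ j, M (blockIdx J K k j) (σ (blockIdx J K k (τ k j))) := by
    rw [← (Equiv.prod_comp (blockEquiv J K) (fun i => M i ((σ * blockPerm J K τ) i)))]
    rw [Fintype.prod_prod_type]
    apply Finset.prod_congr rfl
    intro k _
    apply Finset.prod_congr rfl
    intro j _
    rw [blockEquiv_apply, Equiv.Perm.mul_apply, blockPerm_apply]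
  rw [hsign, hprod, Finset.prod_mul_distrib]
  simp only [Matrix.of_apply]
  ring

lemma rel_equivalence : Equivalence (permBlockRel J K) := by
  constructor
  · intro σ k; rfl
  · intro σ π h k; exact (h k).symm
  · intro a b c h1 h2 k; exact (h1 k).trans (h2 k)

end DetSplitAux

/-- **Lemma 1 (Splitting determinant over permutations).**  The relation `∼_J` is an
equivalence relation on permutations of `{0, …, JK-1}`, the quantity
`sgn(σ) ⋅ ∏_k det(M_{σ,k})` depends only on the `∼_J`-class of `σ`, and for every
system of representatives `R` (one permutation from each class)
`det M = ∑_{σ ∈ R} sgn(σ) ⋅ ∏_{k<K} det(M_{σ,k})`. -/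
theorem det_split_over_perm_classes (J K : ℕ) (hJ : 1 ≤ J) (hK : 1 ≤ K)
    (M : Matrix (Fin (J * K)) (Fin (J * K)) ℝ) :
    Equivalence (permBlockRel J K) ∧
      (∀ σ π : Equiv.Perm (Fin (J * K)), permBlockRel J K σ π →
        permBlockTerm J K M σ = permBlockTerm J K M π) ∧
      ∀ R : Finset (Equiv.Perm (Fin (J * K))),
        (∀ σ : Equiv.Perm (Fin (J * K)), ∃! π, π ∈ R ∧ permBlockRel J K σ π) →
        M.det = ∑ σ ∈ R, permBlockTerm J K M σ := by
  classical
  obtain ⟨hrefl, hsymm, htrans⟩ := DetSplitAux.rel_equivalence J K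
  have hequiv : Equivalence (permBlockRel J K) := ⟨hrefl, @hsymm, @htrans⟩
  have hconst : ∀ σ π : Equiv.Perm (Fin (J * K)), permBlockRel J K σ π →
      permBlockTerm J K M σ = permBlockTerm J K M π := by
    intro σ π h
    rw [DetSplitAux.permBlockTerm_eq_sum, DetSplitAux.permBlockTerm_eq_sum]
    congr 1
    ext ρ
    simp only [Finset.mem_filter, Finset.mem_univ, true_and]
    exact ⟨fun h' => htrans (hsymm h) h', fun h' => htrans h h'⟩
  refine ⟨hequiv, hconst, ?_⟩
  classical
  intro R hR
  have rep : ∀ σ : Equiv.Perm (Fin (J * K)),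
      ∃ π, (π ∈ R ∧ permBlockRel J K σ π) ∧
        ∀ y, (y ∈ R ∧ permBlockRel J K σ y) → y = π := fun σ => hR σ
  choose g hg hguniq using rep
  rw [DetSplitAux.det_eq_sum (J * K) M,
    ← Finset.sum_fiberwise_of_maps_to (g := g) (t := R) (fun σ _ => (hg σ).1)]
  apply Finset.sum_congr rfl
  intro r hr
  rw [DetSplitAux.permBlockTerm_eq_sum]
  congr 1
  ext π
  simp only [Finset.mem_filter, Finset.mem_univ, true_and]
  constructor
  · intro h
    subst h
    exact hsymm (hg π).2
  · intro h
    exact (hguniq π r ⟨hr, hsymm h⟩).symm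
end

section
/- Let K ≥ 1 and let f_0,…,f_{K−1} : ℝ → ℝ be Lebesgue-measurable, linearly independent functions such that every nonzero linear combination of them has a zero set of Lebesgue measure zero. For real coefficients (α_σ)_{σ ∈ P_K} indexed by permutations of {0,…,K−1}, define h : ℝ^K → ℝ by h(t_0,…,t_{K−1}) = Σ_{σ ∈ P_K} α_σ ∏_{k=0}^{K−1} f_{σ(k)}(t_k). Then either all coefficients α_σ are zero, or the zero set {t ∈ ℝ^K : h(t) = 0} has K-dimensional Lebesgue measure zero. -/
open MeasureTheory

private lemma sum_subtype_dite {K : ℕ} (p : Fin K → Prop) [DecidablePred p]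
    (F : ∀ j, p j → ℝ) :
    ∑ j : {j // p j}, F j j.2 = ∑ j : Fin K, if h : p j then F j h else 0 := by
  classical
  set G : Fin K → ℝ := fun j => if h : p j then F j h else 0 with hG
  have h1 : ∑ j : {j // p j}, F j j.2 = ∑ j : {j // p j}, G j.1 := by
    refine Finset.sum_congr rfl fun j _ => ?_
    simp [hG, j.2]
  rw [h1, ← Finset.sum_subtype (Finset.univ.filter p) (by simp) G]
  rw [Finset.sum_filter]
  refine Finset.sum_congr rfl fun j _ => ?_
  by_cases h : p j <;> simp [hG, h]

private lemma aux_emb {K : ℕ} (f : Fin K → ℝ → ℝ) (hmeas : ∀ k, Measurable (f k))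
    (hzero : ∀ c : Fin K → ℝ, c ≠ 0 → volume {t : ℝ | ∑ k, c k * f k t = 0} = 0) :
    ∀ (n : ℕ) (α : (Fin n ↪ Fin K) → ℝ),
      (∀ e, α e = 0) ∨
        volume {t : Fin n → ℝ |
          ∑ e : Fin n ↪ Fin K, α e * ∏ k, f (e k) (t k) = 0} = 0 := by
  intro n
  induction n with
  | zero =>
    intro α
    by_cases hall : ∀ e, α e = 0
    · exact Or.inl hall
    · right
      push_neg at hall
      obtain ⟨e₀, he₀⟩ := hall
      have huniq : ∀ e : Fin 0 ↪ Fin K, e = e₀ := by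
        intro e; ext k; exact k.elim0
      have hset : {t : Fin 0 → ℝ |
          ∑ e : Fin 0 ↪ Fin K, α e * ∏ k, f (e k) (t k) = 0} = ∅ := by
        ext t
        simp only [Set.mem_setOf_eq, Set.mem_empty_iff_false, iff_false]
        rw [Fintype.sum_eq_single e₀ (fun e he => absurd (huniq e) he)]
        simpa using he₀
      rw [hset]; exact measure_empty
  | succ n IH =>
    intro α
    classical
    by_cases hall : ∀ e, α e = 0
    · exact Or.inl hall
    right
    push_neg at hall
    obtain ⟨estar, hestar⟩ := hall
    set E := Equiv.embeddingFinSucc n (Fin K) with hE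
    set β : Fin K → (Fin n ↪ Fin K) → ℝ := fun j e' =>
      if h : j ∉ Set.range e' then α (E.symm ⟨e', ⟨j, h⟩⟩) else 0 with hβ
    set c : (Fin n → ℝ) → Fin K → ℝ := fun u j =>
      ∑ e' : Fin n ↪ Fin K, β j e' * ∏ k, f (e' k) (u k) with hc
    -- the key algebraic identity
    have key : ∀ t : Fin (n + 1) → ℝ,
        ∑ e : Fin (n + 1) ↪ Fin K, α e * ∏ k, f (e k) (t k)
          = ∑ j, c (fun k => t k.succ) j * f j (t 0) := by
      intro t
      rw [← Equiv.sum_comp E.symm (fun e => α e * ∏ k, f (e k) (t k))]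
      rw [← Finset.univ_sigma_univ, Finset.sum_sigma]
      have step1 : ∀ e' : Fin n ↪ Fin K,
          ∑ j : {i // i ∉ Set.range e'},
              α (E.symm ⟨e', j⟩) * ∏ k, f ((E.symm ⟨e', j⟩) k) (t k)
            = ∑ j : Fin K, β j e' * (f j (t 0) * ∏ k, f (e' k) (t k.succ)) := by
        intro e'
        have hval : ∀ (j : {i // i ∉ Set.range e'}),
            α (E.symm ⟨e', j⟩) * ∏ k, f ((E.symm ⟨e', j⟩) k) (t k)
              = α (E.symm ⟨e', j⟩) * (f j.1 (t 0) * ∏ k, f (e' k) (t k.succ)) := by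
          intro j
          have hco : ⇑(E.symm ⟨e', j⟩) = Fin.cons j.1 ⇑e' :=
            Equiv.coe_embeddingFinSucc_symm ⟨e', j⟩
          rw [Fin.prod_univ_succ, hco]
          simp [Fin.cons_zero, Fin.cons_succ]
        rw [Finset.sum_congr rfl fun j _ => hval j]
        rw [sum_subtype_dite (fun i => i ∉ Set.range e')
          (fun j h => α (E.symm ⟨e', ⟨j, h⟩⟩) * (f j (t 0) * ∏ k, f (e' k) (t k.succ)))]
        refine Finset.sum_congr rfl fun j _ => ?_
        by_cases h : j ∉ Set.range e'
        · rw [dif_pos h, hβ]; simp only [dif_pos h]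
        · rw [dif_neg h, hβ]; simp only [dif_neg h, zero_mul]
      rw [Finset.sum_congr rfl fun e' _ => step1 e']
      rw [Finset.sum_comm]
      refine Finset.sum_congr rfl fun j _ => ?_
      rw [hc]
      simp only []
      rw [Finset.sum_mul]
      refine Finset.sum_congr rfl fun e' _ => ?_
      ring
    -- β is nonzero somewhere
    have hc_def : ∀ u j, c u j = ∑ e' : Fin n ↪ Fin K, β j e' * ∏ k, f (e' k) (u k) :=
      fun u j => rfl
    have hβstar : β (E estar).2.1 (E estar).1 ≠ 0 := by
      rw [hβ]
      simp only []
      rw [dif_pos (E estar).2.2]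
      have h1 : (⟨(E estar).1, ⟨(E estar).2.1, (E estar).2.2⟩⟩ :
          (e : Fin n ↪ Fin K) × {i // i ∉ Set.range ⇑e}) = E estar := rfl
      rw [h1, Equiv.symm_apply_apply]
      exact hestar
    set jstar := (E estar).2.1 with hjstar
    -- apply induction hypothesis to β jstar
    have hN : volume {u : Fin n → ℝ | c u jstar = 0} = 0 := by
      rcases IH (β jstar) with h | h
      · exact absurd (h (E estar).1) hβstar
      · exact h
    -- measurability
    have hm1 : ∀ e' : Fin n ↪ Fin K,
        Measurable fun u : Fin n → ℝ => ∏ k, f (e' k) (u k) := fun e' =>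
      Finset.measurable_prod _ fun k _ => (hmeas _).comp (measurable_pi_apply k)
    have hcm : ∀ j, Measurable fun u : Fin n → ℝ => c u j := fun j =>
      Finset.measurable_sum _ fun e' _ => (hm1 e').const_mul _
    set G : ℝ × (Fin n → ℝ) → ℝ := fun q => ∑ j, c q.2 j * f j q.1 with hG
    have hGm : Measurable G :=
      Finset.measurable_sum _ fun j _ =>
        ((hcm j).comp measurable_snd).mul ((hmeas j).comp measurable_fst)
    set T : Set (ℝ × (Fin n → ℝ)) := G ⁻¹' {0} with hT_def
    have hT : MeasurableSet T := hGm (measurableSet_singleton 0)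
    set φ := MeasurableEquiv.piFinSuccAbove (fun _ : Fin (n + 1) => ℝ) 0 with hφ
    have hMP := measurePreserving_piFinSuccAbove
      (fun _ : Fin (n + 1) => (volume : Measure ℝ)) 0
    have hS : {t : Fin (n + 1) → ℝ |
        ∑ e : Fin (n + 1) ↪ Fin K, α e * ∏ k, f (e k) (t k) = 0} = φ ⁻¹' T := by
      ext t
      simp only [Set.mem_setOf_eq, Set.mem_preimage, hT_def, hG,
        MeasurableEquiv.piFinSuccAbove_apply, Set.mem_singleton_iff, Fin.zero_succAbove]
      rw [key t]
      have hφt : φ t = (t 0, fun k => t k.succ) := by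
        rw [hφ]
        simp [MeasurableEquiv.piFinSuccAbove_apply, Fin.zero_succAbove]
        rfl
      rw [hφt]
    rw [hS, volume_pi]
    have hpre := hMP.measure_preimage hT.nullMeasurableSet
    rw [hpre, Measure.prod_apply_symm hT]
    have hae : ∀ᵐ u ∂(Measure.pi fun _ : Fin n => (volume : Measure ℝ)),
        volume ((fun x => (x, u)) ⁻¹' T) = 0 := by
      have hN' : (Measure.pi fun _ : Fin n => (volume : Measure ℝ))
          {u : Fin n → ℝ | c u jstar = 0} = 0 := by
        rw [← volume_pi]; exact hN
      filter_upwards [measure_eq_zero_iff_ae_notMem.mp hN'] with u hu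
      have hcne : (fun j => c u j) ≠ 0 := by
        intro h0
        exact hu (congrFun h0 jstar)
      have hz := hzero (fun j => c u j) hcne
      have hset : (fun x : ℝ => (x, u)) ⁻¹' T = {x : ℝ | ∑ j, c u j * f j x = 0} := by
        ext x
        simp [hT_def, hG]
      rw [hset]
      exact hz
    rw [lintegral_congr_ae hae, lintegral_zero]

/-- **Lemma 2 (Measure zero).**  Let `f₀, …, f_{K-1} : ℝ → ℝ` be measurable,
linearly independent functions such that every nonzero linear combination of them
has a null zero set.  For coefficients `α_σ` indexed by permutations of
`{0, …, K-1}`, the function `h(t) = ∑_σ α_σ ∏_k f_{σ(k)}(t_k)` either has all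
coefficients zero, or its zero set is Lebesgue-null in `ℝ^K`. -/
theorem measure_zero_of_perm_sum (K : ℕ) (hK : 1 ≤ K)
    (f : Fin K → ℝ → ℝ)
    (hmeas : ∀ k, Measurable (f k))
    (hli : LinearIndependent ℝ f)
    (hzero : ∀ c : Fin K → ℝ, c ≠ 0 →
      volume {t : ℝ | ∑ k, c k * f k t = 0} = 0)
    (α : Equiv.Perm (Fin K) → ℝ) :
    (∀ σ : Equiv.Perm (Fin K), α σ = 0) ∨
      volume {t : Fin K → ℝ |
        ∑ σ : Equiv.Perm (Fin K), α σ * ∏ k : Fin K, f (σ k) (t k) = 0} = 0 := by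
  classical
  let P : Equiv.Perm (Fin K) ≃ (Fin K ↪ Fin K) :=
  { toFun := fun σ => σ.toEmbedding
    invFun := fun e => Equiv.ofBijective e
      ((Fintype.bijective_iff_injective_and_card e).mpr ⟨e.injective, rfl⟩)
    left_inv := fun σ => by ext x; rfl
    right_inv := fun e => by ext x; rfl }
  set α' : (Fin K ↪ Fin K) → ℝ := fun e => α (P.symm e) with hα'
  have hsum : ∀ t : Fin K → ℝ,
      ∑ σ : Equiv.Perm (Fin K), α σ * ∏ k : Fin K, f (σ k) (t k)
        = ∑ e : Fin K ↪ Fin K, α' e * ∏ k : Fin K, f (e k) (t k) := by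
    intro t
    rw [← Equiv.sum_comp P (fun e => α' e * ∏ k : Fin K, f (e k) (t k))]
    refine Finset.sum_congr rfl fun σ _ => ?_
    have h1 : α' (P σ) = α σ := congrArg α (P.left_inv σ)
    rw [h1]
    rfl
  rcases aux_emb f hmeas hzero K α' with h | h
  · left
    intro σ
    have := h (P σ)
    exact (congrArg α (P.left_inv σ)).symm.trans this
  · right
    have hset : {t : Fin K → ℝ |
        ∑ σ : Equiv.Perm (Fin K), α σ * ∏ k : Fin K, f (σ k) (t k) = 0}
        = {t : Fin K → ℝ | ∑ e : Fin K ↪ Fin K, α' e * ∏ k, f (e k) (t k) = 0} := by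
      ext t; simp only [Set.mem_setOf_eq, hsum t]
    rw [hset]
    exact h
end

section
/- Let J, K ≥ 1, N = JK. Let f_0,…,f_{K−1} : ℝ → ℝ be functions, write f(t) = (f_0(t),…,f_{K−1}(t)) ∈ ℝ^K, let g_0,…,g_{N−1} ∈ ℝ^J, and let t_0,…,t_{N−1} ∈ ℝ. Let Γ ∈ ℝ^{N×N} be the matrix whose n-th row is vec(g_n f(t_n)ᵀ), i.e., Γ[n, kJ+j] = (g_n)_j · f_k(t_n) for 0 ≤ j < J, 0 ≤ k < K. For a permutation σ of {0,…,N−1} and k < K, let G_{σ,k} ∈ ℝ^{J×J} be the matrix whose j-th column is g_{σ(Jk+j)}. Then det(Γ) = Σ_{[σ] ∈ P_N/∼_J} sgn(σ*)·(∏_{k=0}^{K−1} det(G_{σ*,k}))·(∏_{k=0}^{K−1} ∏_{j=0}^{J−1} f_k(t_{σ*(Jk+j)})), where the sum is over the equivalence classes of the relation ∼_J (σ ∼_J π iff for every k < K the sets {σ(Jk+j) : j < J} and {π(Jk+j) : j < J} coincide) and σ* is any representative of the class, the summand being independent of the choice of representative. -/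
open MeasureTheory

/-- The summand `sgn(σ) ⋅ (∏_k det G_{σ,k}) ⋅ (∏_k ∏_j f_k(t_{σ(Jk+j)}))`, where the
`j`-th column of `G_{σ,k} ∈ ℝ^{J×J}` is the vector `g_{σ(Jk+j)}`. -/
noncomputable def gammaTerm (J K : ℕ) (g : Fin (J * K) → Fin J → ℝ)
    (f : Fin K → ℝ → ℝ) (t : Fin (J * K) → ℝ) (σ : Equiv.Perm (Fin (J * K))) : ℝ :=
  ((Equiv.Perm.sign σ : ℤ) : ℝ) *
    (∏ k : Fin K,
      Matrix.det (Matrix.of fun i j : Fin J => g (σ (blockIdx J K k j)) i)) *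
    ∏ k : Fin K, ∏ j : Fin J, f k (t (σ (blockIdx J K k j)))

namespace DetGammaAux

instance permBlockRelDec (J K : ℕ) (σ π : Equiv.Perm (Fin (J * K))) :
    Decidable (permBlockRel J K σ π) := by
  unfold permBlockRel; infer_instance

lemma blockIdx_inj {J K : ℕ} (hJ : 0 < J) {k k' : Fin K} {j j' : Fin J}
    (h : blockIdx J K k j = blockIdx J K k' j') : k = k' ∧ j = j' := by
  have h' : J * (k : ℕ) + (j : ℕ) = J * (k' : ℕ) + (j' : ℕ) := congrArg Fin.val h
  have hk : (k : ℕ) = (k' : ℕ) := by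
    have := congrArg (· / J) h'
    simpa [Nat.mul_add_div hJ, Nat.div_eq_of_lt j.isLt, Nat.div_eq_of_lt j'.isLt] using this
  refine ⟨Fin.ext hk, Fin.ext ?_⟩
  rw [hk] at h'
  exact Nat.add_left_cancel h'

/-- The equivalence `Fin K × Fin J ≃ Fin (J*K)`, `(k, j) ↦ J*k + j`. -/
noncomputable def E (J K : ℕ) (hJ : 0 < J) : Fin K × Fin J ≃ Fin (J * K) :=
  Equiv.ofBijective (fun p => blockIdx J K p.1 p.2)
    ((Fintype.bijective_iff_injective_and_card _).2
      ⟨fun p q h => by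
          obtain ⟨h1, h2⟩ := blockIdx_inj hJ h
          exact Prod.ext h1 h2,
        by simp [mul_comm]⟩)

@[simp] lemma E_apply {J K : ℕ} (hJ : 0 < J) (k : Fin K) (j : Fin J) :
    E J K hJ (k, j) = blockIdx J K k j := rfl

lemma E_symm_blockIdx {J K : ℕ} (hJ : 0 < J) (k : Fin K) (j : Fin J) :
    (E J K hJ).symm (blockIdx J K k j) = (k, j) := by
  rw [Equiv.symm_apply_eq]; rfl

/-- The block-diagonal permutation `(k,j) ↦ (k, τ k j)` of `Fin (J*K)`. -/
noncomputable def ρ {J K : ℕ} (hJ : 0 < J) (τ : Fin K → Equiv.Perm (Fin J)) :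
    Equiv.Perm (Fin (J * K)) :=
  (E J K hJ).permCongr (Equiv.prodCongrRight τ)

lemma ρ_apply {J K : ℕ} (hJ : 0 < J) (τ : Fin K → Equiv.Perm (Fin J))
    (k : Fin K) (j : Fin J) :
    ρ hJ τ (blockIdx J K k j) = blockIdx J K k (τ k j) := by
  simp [ρ, E_symm_blockIdx hJ, Equiv.prodCongrRight]

lemma sign_ρ {J K : ℕ} (hJ : 0 < J) (τ : Fin K → Equiv.Perm (Fin J)) :
    Equiv.Perm.sign (ρ hJ τ) = ∏ k : Fin K, Equiv.Perm.sign (τ k) := by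
  rw [ρ, Equiv.Perm.sign_permCongr, Equiv.Perm.sign_prodCongrRight]

lemma ρ_inj {J K : ℕ} (hJ : 0 < J) : Function.Injective (ρ (J := J) (K := K) hJ) := by
  intro τ τ' h
  funext k
  ext j
  have h2 : blockIdx J K k (τ k j) = blockIdx J K k (τ' k j) := by
    rw [← ρ_apply hJ τ k j, ← ρ_apply hJ τ' k j, h]
  exact Fin.val_eq_of_eq (blockIdx_inj hJ h2).2

lemma rel_iff {J K : ℕ} (hJ : 0 < J) (σ π : Equiv.Perm (Fin (J * K))) :
    permBlockRel J K σ π ↔ ∃ τ : Fin K → Equiv.Perm (Fin J), σ = π * ρ hJ τ := by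
  constructor
  · intro h
    have key : ∀ (k : Fin K) (j : Fin J), ∃ j' : Fin J,
        π (blockIdx J K k j') = σ (blockIdx J K k j) := by
      intro k j
      have hmem : σ (blockIdx J K k j) ∈
          Finset.image (fun j : Fin J => π (blockIdx J K k j)) Finset.univ := by
        rw [← h k]; exact Finset.mem_image_of_mem _ (Finset.mem_univ j)
      simpa using hmem
    choose u hu using key
    have uinj : ∀ k, Function.Injective (u k) := by
      intro k j1 j2 hj
      have : σ (blockIdx J K k j1) = σ (blockIdx J K k j2) := by
        rw [← hu k j1, ← hu k j2, hj]
      exact (blockIdx_inj hJ (σ.injective this)).2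
    refine ⟨fun k => Equiv.ofBijective (u k)
      ((Fintype.bijective_iff_injective_and_card _).2 ⟨uinj k, rfl⟩), ?_⟩
    refine Equiv.ext fun x => ?_
    obtain ⟨⟨k, j⟩, rfl⟩ := (E J K hJ).surjective x
    rw [E_apply]
    rw [Equiv.Perm.mul_apply, ρ_apply]
    exact (hu k j).symm
  · rintro ⟨τ, rfl⟩
    intro k
    have hfun : (fun j : Fin J => (π * ρ hJ τ) (blockIdx J K k j)) =
        (fun j : Fin J => π (blockIdx J K k j)) ∘ (τ k) := by
      funext j
      simp [Equiv.Perm.mul_apply, ρ_apply]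
    rw [hfun, ← Finset.image_image]
    congr 1
    exact Finset.image_univ_equiv (τ k)

lemma class_eq {J K : ℕ} (hJ : 0 < J) (π : Equiv.Perm (Fin (J * K))) :
    Finset.univ.filter (fun σ => permBlockRel J K σ π) =
      Finset.image (fun τ => π * ρ hJ τ) Finset.univ := by
  ext σ
  simp only [Finset.mem_filter, Finset.mem_univ, true_and, Finset.mem_image,
    rel_iff hJ σ π]
  exact ⟨fun ⟨τ, h⟩ => ⟨τ, h.symm⟩, fun ⟨τ, h⟩ => ⟨τ, h.symm⟩⟩

end DetGammaAux

open DetGammaAux in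
/-- **Determinant factorization from the proof of Theorem 1.**  If `Γ` is the
`JK×JK` matrix with entries `Γ[n, Jk+j] = (gₙ)_j ⋅ f_k(tₙ)`, then the summand
`sgn(σ)(∏_k det G_{σ,k})(∏_{k,j} f_k(t_{σ(Jk+j)}))` depends only on the
`∼_J`-class of `σ`, and for any system of representatives `R` of the classes,
`det Γ` equals the sum of these summands over `R`. -/
theorem det_gamma_factorization (J K : ℕ) (hJ : 1 ≤ J) (hK : 1 ≤ K)
    (f : Fin K → ℝ → ℝ) (g : Fin (J * K) → Fin J → ℝ) (t : Fin (J * K) → ℝ)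
    (Γ : Matrix (Fin (J * K)) (Fin (J * K)) ℝ)
    (hΓ : ∀ (n : Fin (J * K)) (k : Fin K) (j : Fin J),
      Γ n (blockIdx J K k j) = g n j * f k (t n)) :
    (∀ σ π : Equiv.Perm (Fin (J * K)), permBlockRel J K σ π →
        gammaTerm J K g f t σ = gammaTerm J K g f t π) ∧
      ∀ R : Finset (Equiv.Perm (Fin (J * K))),
        (∀ σ : Equiv.Perm (Fin (J * K)), ∃! π, π ∈ R ∧ permBlockRel J K σ π) →
        Γ.det = ∑ σ ∈ R, gammaTerm J K g f t σ := by
  classical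
  have hJ0 : 0 < J := hJ
  set F : Equiv.Perm (Fin (J * K)) → ℝ := fun σ =>
    ((Equiv.Perm.sign σ : ℤ) : ℝ) *
      ∏ k : Fin K, ∏ j : Fin J, Γ (σ (blockIdx J K k j)) (blockIdx J K k j) with hF
  -- the sum of `F` over the class of `π` is `gammaTerm π`
  have sum_class : ∀ π : Equiv.Perm (Fin (J * K)),
      ∑ σ ∈ Finset.univ.filter (fun σ => permBlockRel J K σ π), F σ =
        gammaTerm J K g f t π := by
    intro π
    rw [class_eq hJ0 π, Finset.sum_image (fun τ _ τ' _ h =>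
      ρ_inj hJ0 (mul_left_cancel h))]
    have hterm : ∀ τ : Fin K → Equiv.Perm (Fin J),
        F (π * ρ hJ0 τ) =
          ((Equiv.Perm.sign π : ℤ) : ℝ) *
            (∏ k : Fin K, (((Equiv.Perm.sign (τ k) : ℤ) : ℝ) *
              ∏ j : Fin J, g (π (blockIdx J K k (τ k j))) j)) *
            ∏ k : Fin K, ∏ j : Fin J, f k (t (π (blockIdx J K k j))) := by
      intro τ
      have hsign : ((Equiv.Perm.sign (π * ρ hJ0 τ) : ℤ) : ℝ) =
          ((Equiv.Perm.sign π : ℤ) : ℝ) *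
            ∏ k : Fin K, ((Equiv.Perm.sign (τ k) : ℤ) : ℝ) := by
        rw [map_mul, sign_ρ hJ0, Units.val_mul, Int.cast_mul]
        congr 1
        rw [show ((∏ k : Fin K, Equiv.Perm.sign (τ k) : ℤˣ) : ℤ) =
            ∏ k : Fin K, ((Equiv.Perm.sign (τ k) : ℤˣ) : ℤ) from
          map_prod (Units.coeHom ℤ) _ _, Int.cast_prod]
      have hprod : ∀ k : Fin K,
          (∏ j : Fin J, Γ ((π * ρ hJ0 τ) (blockIdx J K k j)) (blockIdx J K k j)) =
            (∏ j : Fin J, g (π (blockIdx J K k (τ k j))) j) *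
              ∏ j : Fin J, f k (t (π (blockIdx J K k j))) := by
        intro k
        rw [← Finset.prod_mul_distrib]
        have : (∏ j : Fin J, g (π (blockIdx J K k (τ k j))) j *
              f k (t (π (blockIdx J K k j)))) =
            ∏ j : Fin J, g (π (blockIdx J K k (τ k j))) j *
              f k (t (π (blockIdx J K k (τ k j)))) := by
          rw [Finset.prod_mul_distrib, Finset.prod_mul_distrib]
          congr 1
          exact (Equiv.prod_comp (τ k) fun j => f k (t (π (blockIdx J K k j)))).symm
        rw [this]
        refine Finset.prod_congr rfl fun j _ => ?_
        rw [Equiv.Perm.mul_apply, ρ_apply, hΓ]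
      rw [hF]
      simp only [hsign, hprod]
      rw [Finset.prod_mul_distrib, Finset.prod_mul_distrib]
      ring
    rw [Finset.sum_congr rfl fun τ _ => hterm τ]
    have hdet : ∀ k : Fin K,
        Matrix.det (Matrix.of fun i j : Fin J => g (π (blockIdx J K k j)) i) =
          ∑ x : Equiv.Perm (Fin J), ((Equiv.Perm.sign x : ℤ) : ℝ) *
            ∏ j : Fin J, g (π (blockIdx J K k (x j))) j := by
      intro k
      rw [← Matrix.det_transpose, Matrix.det_apply]
      refine Finset.sum_congr rfl fun x _ => ?_
      simp [Units.smul_def, zsmul_eq_mul, Matrix.transpose_apply]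
    have hmain : (∏ k : Fin K,
        Matrix.det (Matrix.of fun i j : Fin J => g (π (blockIdx J K k j)) i)) =
        ∑ τ : Fin K → Equiv.Perm (Fin J), ∏ k : Fin K,
          ((Equiv.Perm.sign (τ k) : ℤ) : ℝ) *
            ∏ j : Fin J, g (π (blockIdx J K k (τ k j))) j := by
      rw [Finset.prod_congr rfl fun k _ => hdet k]
      exact Fintype.prod_sum _
    rw [gammaTerm, hmain, Finset.mul_sum, Finset.sum_mul]
  -- the equivalence classes with the same base point coincide
  have class_congr : ∀ σ π : Equiv.Perm (Fin (J * K)), permBlockRel J K σ π →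
      Finset.univ.filter (fun x => permBlockRel J K x σ) =
        Finset.univ.filter (fun x => permBlockRel J K x π) := by
    intro σ π h
    ext x
    simp only [Finset.mem_filter, Finset.mem_univ, true_and]
    constructor
    · intro hx k; rw [hx k, h k]
    · intro hx k; rw [hx k, ← h k]
  constructor
  · intro σ π h
    rw [← sum_class σ, ← sum_class π, class_congr σ π h]
  · intro R hR
    -- the classes of representatives partition `univ`
    have cover : (Finset.univ : Finset (Equiv.Perm (Fin (J * K)))) =
        R.biUnion (fun π => Finset.univ.filter (fun σ => permBlockRel J K σ π)) := by
      ext σ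
      simp only [Finset.mem_univ, true_iff, Finset.mem_biUnion, Finset.mem_filter]
      obtain ⟨π, ⟨hπR, hπ⟩, -⟩ := hR σ
      exact ⟨π, hπR, trivial, hπ⟩
    have hdisj : (R : Set (Equiv.Perm (Fin (J * K)))).PairwiseDisjoint
        (fun π => Finset.univ.filter (fun σ => permBlockRel J K σ π)) := by
      intro π hπ π' hπ' hne
      refine Finset.disjoint_left.2 fun σ hσ hσ' => hne ?_
      obtain ⟨w, -, huniq⟩ := hR σ
      have h1 := huniq π ⟨hπ, (Finset.mem_filter.1 hσ).2⟩
      have h2 := huniq π' ⟨hπ', (Finset.mem_filter.1 hσ').2⟩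
      rw [h1, h2]
    have hdet : Γ.det = ∑ σ : Equiv.Perm (Fin (J * K)), F σ := by
      rw [Matrix.det_apply]
      refine Finset.sum_congr rfl fun σ _ => ?_
      rw [hF]
      simp only [Units.smul_def, zsmul_eq_mul]
      congr 1
      rw [← Equiv.prod_comp (E J K hJ0) (fun i => Γ (σ i) i), Fintype.prod_prod_type]
      rfl
    rw [hdet, cover, Finset.sum_biUnion hdisj]
    exact Finset.sum_congr rfl fun π _ => sum_class π
end

section
/- Let J, K ≥ 1 and let ℓ : S → A be a labeling of a finite set S of cardinality JK by elements of a set A. Then the following are equivalent: (i) every label value has at most K preimages under ℓ; (ii) there exists a partition of S into K blocks, each of cardinality J, such that ℓ is injective on each block. Equivalently (contrapositive of (ii)⇒(i) via pigeonhole): if for every partition of S into K blocks of size J some block contains two elements with the same label, then some label value occurs at least K+1 times. -/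
/-- **Combinatorial step in the proof of Theorem 1.**  Let `S` be a finite set of
cardinality `J*K` and `ℓ : S → A` a labeling.  Then every label value has at most
`K` preimages **iff** `S` can be partitioned into `K` blocks of size `J` on each of
which `ℓ` is injective. -/
theorem label_bound_iff_injective_partition (J K : ℕ) (hJ : 1 ≤ J) (hK : 1 ≤ K)
    {S A : Type*} [Fintype S] (hS : Fintype.card S = J * K) (ℓ : S → A) :
    (∀ a : A, {s : S | ℓ s = a}.ncard ≤ K) ↔
      ∃ B : Fin K → Finset S,
        (∀ k, (B k).card = J) ∧
        (∀ s : S, ∃! k, s ∈ B k) ∧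
        ∀ k, Set.InjOn ℓ (B k : Set S) := by
  classical
  have hK0 : 0 < K := hK
  have hncard : ∀ a : A, {s : S | ℓ s = a}.ncard
      = (Finset.univ.filter (fun s => ℓ s = a)).card := by
    intro a
    rw [Set.ncard_eq_toFinset_card']
    congr 1
    ext s
    simp
  constructor
  · intro hbound
    set Fib : A → Finset S := fun a => Finset.univ.filter (fun s => ℓ s = a) with hFib
    have hFibcard : ∀ a, (Fib a).card ≤ K := by
      intro a; rw [← hncard a]; exact hbound a
    set Lab : List A := (Finset.univ.image ℓ).toList with hLab
    set L : List S := Lab.flatMap (fun a => (Fib a).toList) with hL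
    have hLabnd : Lab.Nodup := Finset.nodup_toList _
    have hLnd : L.Nodup := by
      rw [hL, List.nodup_flatMap]
      constructor
      · intro a _; exact Finset.nodup_toList _
      · refine hLabnd.imp ?_
        intro a b hab
        intro s hsa hsb
        simp only [Finset.mem_toList, hFib, Finset.mem_filter] at hsa hsb
        exact hab (hsa.2 ▸ hsb.2)
    have hmemL : ∀ s : S, s ∈ L := by
      intro s
      rw [hL, List.mem_flatMap]
      exact ⟨ℓ s, by simp [hLab], by simp [hFib]⟩
    have hLfin : L.toFinset = (Finset.univ : Finset S) := by
      ext s; simp [hmemL s]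
    have hlen : L.length = J * K := by
      rw [← List.toFinset_card_of_nodup hLnd, hLfin, ← hS]
      rfl
    have hidx_lt : ∀ s : S, List.idxOf s L < J * K := by
      intro s; rw [← hlen]; exact List.idxOf_lt_length_iff.2 (hmemL s)
    refine ⟨fun k => Finset.univ.filter (fun s => List.idxOf s L % K = k.val),
      ?_, ?_, ?_⟩
    · -- cardinality of each block is J
      intro k
      have hbij : (Finset.univ.filter (fun s => List.idxOf s L % K = k.val)).card
          = ((Finset.range (J*K)).filter (fun i => i % K = k.val)).card := by
        refine Finset.card_bij (fun s _ => List.idxOf s L) ?_ ?_ ?_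
        · intro s hs
          simp only [Finset.mem_filter, Finset.mem_univ, true_and] at hs ⊢
          exact ⟨Finset.mem_range.2 (hidx_lt s), hs⟩
        · intro s _ t _ hst
          exact (List.idxOf_inj (hmemL s)).1 hst
        · intro i hi
          simp only [Finset.mem_filter, Finset.mem_range] at hi
          have hi' : i < L.length := by rw [hlen]; exact hi.1
          refine ⟨L.get ⟨i, hi'⟩, ?_, ?_⟩
          · simp only [Finset.mem_filter, Finset.mem_univ, true_and]
            rw [List.get_idxOf hLnd ⟨i, hi'⟩]
            exact hi.2
          · simpa using List.get_idxOf hLnd ⟨i, hi'⟩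
      rw [hbij]
      have himg : (Finset.range (J*K)).filter (fun i => i % K = k.val)
          = (Finset.range J).image (fun j => j * K + k.val) := by
        ext i
        simp only [Finset.mem_filter, Finset.mem_range, Finset.mem_image]
        constructor
        · rintro ⟨h1, h2⟩
          refine ⟨i / K, ?_, ?_⟩
          · exact Nat.div_lt_of_lt_mul (by rwa [Nat.mul_comm] at h1)
          · rw [← h2]; exact Nat.div_add_mod' i K
        · rintro ⟨j, hj, rfl⟩
          have hk : k.val < K := k.isLt
          constructor
          · calc j * K + k.val < j * K + K := by omega
              _ = (j+1) * K := by ring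
              _ ≤ J * K := Nat.mul_le_mul_right K hj
          · rw [Nat.add_comm, Nat.add_mul_mod_self_right, Nat.mod_eq_of_lt hk]
      rw [himg, Finset.card_image_of_injective _ ?_, Finset.card_range]
      intro x y hxy
      simp only at hxy
      have := Nat.add_right_cancel hxy
      exact Nat.eq_of_mul_eq_mul_right hK0 this
    · -- every element lies in exactly one block
      intro s
      refine ⟨⟨List.idxOf s L % K, Nat.mod_lt _ hK0⟩, ?_, ?_⟩
      · simp
      · intro k hk
        simp only [Finset.mem_filter, Finset.mem_univ, true_and] at hk
        exact Fin.ext hk.symm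
    · -- ℓ injective on each block
      intro k s hs t ht hst
      simp only [Finset.coe_filter, Set.mem_setOf_eq, Finset.mem_univ, true_and] at hs ht
      set a : A := ℓ s with ha
      have hta : ℓ t = a := hst.symm
      have haLab : a ∈ Lab := by simp [hLab]; exact ⟨s, ha.symm⟩
      obtain ⟨A₁, A₂, hsplit⟩ := List.append_of_mem haLab
      have haA₁ : a ∉ A₁ := by
        have := hsplit ▸ hLabnd
        rw [List.nodup_append] at this
        intro hmem
        exact this.2.2 a hmem a List.mem_cons_self rfl
      set f : A → List S := fun b => (Fib b).toList with hf
      have hLsplit : L = A₁.flatMap f ++ ((Fib a).toList ++ A₂.flatMap f) := by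
        rw [hL, hsplit, List.flatMap_append, List.flatMap_cons]
      have hnot : ∀ u : S, ℓ u = a → u ∉ A₁.flatMap f := by
        intro u hu hmem
        rw [List.mem_flatMap] at hmem
        obtain ⟨b, hb, hub⟩ := hmem
        simp only [hf, Finset.mem_toList, hFib, Finset.mem_filter] at hub
        have hba : b = a := by rw [← hub.2, hu]
        exact haA₁ (hba ▸ hb)
      have hmemFib : ∀ u : S, ℓ u = a → u ∈ (Fib a).toList := by
        intro u hu; simp [hFib, hu]
      have hidx : ∀ u : S, ℓ u = a →
          List.idxOf u L = (A₁.flatMap f).length + List.idxOf u (Fib a).toList ∧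
          List.idxOf u (Fib a).toList < K := by
        intro u hu
        constructor
        · rw [hLsplit, List.idxOf_append_of_notMem (hnot u hu),
            List.idxOf_append_of_mem (hmemFib u hu)]
        · calc List.idxOf u (Fib a).toList < (Fib a).toList.length :=
              List.idxOf_lt_length_iff.2 (hmemFib u hu)
            _ = (Fib a).card := Finset.length_toList _
            _ ≤ K := hFibcard a
      obtain ⟨hs1, hs2⟩ := hidx s rfl
      obtain ⟨ht1, ht2⟩ := hidx t hta
      have hmod : List.idxOf s L % K = List.idxOf t L % K := by
        rw [hs, ht]
      rw [hs1, ht1] at hmod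
      have : List.idxOf s (Fib a).toList = List.idxOf t (Fib a).toList := by
        have h1 := Nat.ModEq.add_left_cancel' (A₁.flatMap f).length
          (Nat.ModEq.symm hmod)
        have h2 : List.idxOf s (Fib a).toList % K = List.idxOf t (Fib a).toList % K :=
          h1.symm
        rwa [Nat.mod_eq_of_lt hs2, Nat.mod_eq_of_lt ht2] at h2
      have : List.idxOf s L = List.idxOf t L := by rw [hs1, ht1, this]
      exact (List.idxOf_inj (hmemL s)).1 this
  · rintro ⟨B, hcard, huniq, hinj⟩ a
    rw [hncard a]
    have hch : ∀ s : S, ∃ k, s ∈ B k := fun s => (huniq s).exists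
    choose f hf using hch
    calc (Finset.univ.filter (fun s => ℓ s = a)).card
        ≤ (Finset.univ : Finset (Fin K)).card := by
          refine Finset.card_le_card_of_injOn f (fun _ _ => Finset.mem_univ _) ?_
          intro s hs t ht hst
          simp only [Finset.coe_filter, Set.mem_setOf_eq] at hs ht
          exact hinj (f s) (hf s) (hst ▸ hf t) (hs.2.trans ht.2.symm)
      _ = K := by simp
end

section
/- Let D, K ≥ 1 and define f(t) = (1, t, …, t^{K−1}) ∈ ℝ^K. Let a_0,…,a_{M−1} ∈ ℝ^D be anchor points, let N ≥ 1, let m : {0,…,N−1} → {0,…,M−1} assign an anchor to each measurement, and set k_m = #{n : m(n) = m}. Assume Σ_{m=0}^{M−1} min(k_m, K) < K(D+1). Then for every choice of sampling times (t_0,…,t_{N−1}) ∈ ℝ^N, the matrix C is not uniquely determined by the linearized system: there exist matrices C ≠ C' in ℝ^{D×K} and symmetric matrices L, L' ∈ ℝ^{K×K} such that a_{m(n)}ᵀ C f(t_n) − ½ f(t_n)ᵀ L f(t_n) = a_{m(n)}ᵀ C' f(t_n) − ½ f(t_n)ᵀ L' f(t_n) for every n = 0,…,N−1. -/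
open MeasureTheory

open Module in
private lemma finrank_finset_sup_le_sum' {E : Type*} [AddCommGroup E] [Module ℝ E]
    [FiniteDimensional ℝ E] {ι : Type*} [DecidableEq ι] (V : ι → Submodule ℝ E)
    (s : Finset ι) : finrank ℝ ↥(s.sup V) ≤ ∑ i ∈ s, finrank ℝ ↥(V i) := by
  classical
  induction s using Finset.induction_on with
  | empty => simp
  | insert A s ha ih =>
    rw [Finset.sup_insert, Finset.sum_insert ha]
    have h := Submodule.finrank_sup_add_finrank_inf_eq (V A) (s.sup V)
    omega

private def evalMap {N : ℕ} (r : ℕ) (t : Fin N → ℝ) : (Fin r → ℝ) →ₗ[ℝ] (Fin N → ℝ) where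
  toFun := fun p n => ∑ j : Fin r, p j * t n ^ (j : ℕ)
  map_add' := by
    intro p q; funext n; simp [add_mul, Finset.sum_add_distrib]
  map_smul' := by
    intro c p; funext n; simp [Finset.mul_sum, mul_assoc]

private def anchorMap {N M : ℕ} (K : ℕ) (t : Fin N → ℝ) (μ : Fin N → Fin M) (m : Fin M) :
    (Fin K → ℝ) →ₗ[ℝ] (Fin N → ℝ) where
  toFun := fun c n => if μ n = m then ∑ k : Fin K, c k * t n ^ (k : ℕ) else 0
  map_add' := by
    intro c c'; funext n; by_cases h : μ n = m <;>
      simp [h, add_mul, Finset.sum_add_distrib]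
  map_smul' := by
    intro r c; funext n; by_cases h : μ n = m <;>
      simp [h, Finset.mul_sum, mul_assoc]

private def restrMap {N M : ℕ} (μ : Fin N → Fin M) (m : Fin M) [DecidableEq (Fin M)] :
    ({n : Fin N // μ n = m} → ℝ) →ₗ[ℝ] (Fin N → ℝ) where
  toFun := fun x n => if h : μ n = m then x ⟨n, h⟩ else 0
  map_add' := by intro x y; funext n; by_cases h : μ n = m <;> simp [h]
  map_smul' := by intro r x; funext n; by_cases h : μ n = m <;> simp [h]

private def coefMap {D K M N : ℕ} (a : Fin M → Fin D → ℝ) (μ : Fin N → Fin M) (t : Fin N → ℝ) :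
    Matrix (Fin D) (Fin K) ℝ →ₗ[ℝ] (Fin N → ℝ) where
  toFun := fun C n => dotProduct (a (μ n)) (C.mulVec fun k : Fin K => t n ^ (k : ℕ))
  map_add' := by
    intro C C'; funext n; simp [Matrix.add_mulVec, dotProduct_add]
  map_smul' := by
    intro r C; funext n; simp [Matrix.smul_mulVec, dotProduct_smul]

private lemma exists_nonzero_C (D K M N : ℕ) (hD : 1 ≤ D) (hK : 1 ≤ K)
    (a : Fin M → Fin D → ℝ) (μ : Fin N → Fin M)
    (hcount : ∑ m : Fin M, min (Finset.univ.filter fun n : Fin N => μ n = m).card K <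
      K * (D + 1)) (t : Fin N → ℝ) :
    ∃ (C : Matrix (Fin D) (Fin K) ℝ) (p : Fin (2 * K - 1) → ℝ), C ≠ 0 ∧
      ∀ n : Fin N, dotProduct (a (μ n)) (C.mulVec fun k : Fin K => t n ^ (k : ℕ))
        = ∑ j : Fin (2 * K - 1), p j * t n ^ (j : ℕ) := by
  classical
  set T : Finset ℝ := Finset.image t Finset.univ with hT
  by_cases hτ : T.card < K
  · -- few distinct sampling times : use the vanishing polynomial
    set P : Polynomial ℝ := ∏ s ∈ T, (Polynomial.X - Polynomial.C s) with hP
    have hmon : P.Monic :=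
      Polynomial.monic_prod_of_monic _ _ fun s _ => Polynomial.monic_X_sub_C s
    have hdeg : P.natDegree = T.card := by
      rw [hP, Polynomial.natDegree_prod _ _ (fun s _ => Polynomial.X_sub_C_ne_zero s)]
      simp
    set d0 : Fin D := ⟨0, hD⟩ with hd0
    refine ⟨fun d k => if d = d0 then P.coeff (k : ℕ) else 0, 0, ?_, ?_⟩
    · intro h
      have h1 := congrFun (congrFun h d0) ⟨T.card, hτ⟩
      have h2 : P.coeff T.card = 1 := by
        have := hmon.coeff_natDegree
        rwa [hdeg] at this
      simp only [if_pos rfl, Matrix.zero_apply] at h1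
      rw [h2] at h1
      exact one_ne_zero h1
    · intro n
      have hroot : P.eval (t n) = 0 := by
        rw [hP, Polynomial.eval_prod]
        refine Finset.prod_eq_zero (Finset.mem_image_of_mem t (Finset.mem_univ n)) ?_
        simp
      have hsum : ∑ k : Fin K, P.coeff (k : ℕ) * t n ^ (k : ℕ) = 0 := by
        have he := Polynomial.eval_eq_sum_range' (p := P) (n := K) (by omega) (t n)
        rw [Fin.sum_univ_eq_sum_range (fun k => P.coeff k * t n ^ k) K, ← he, hroot]
      have hzero : ∀ d : Fin D,
          a (μ n) d * (∑ k : Fin K, (if d = d0 then P.coeff (k : ℕ) else 0) * t n ^ (k : ℕ))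
          = if d = d0 then a (μ n) d * ∑ k : Fin K, P.coeff (k : ℕ) * t n ^ (k : ℕ) else 0 := by
        intro d; split <;> simp
      simp only [dotProduct, Matrix.mulVec]
      rw [Finset.sum_congr rfl fun d _ => hzero d, Finset.sum_ite_eq' Finset.univ d0]
      simp [hsum]
  · -- many distinct sampling times : dimension counting
    push_neg at hτ
    by_contra hcon
    push_neg at hcon
    set Φ : Matrix (Fin D) (Fin K) ℝ →ₗ[ℝ] (Fin N → ℝ) := coefMap a μ t with hΦ
    set W : Submodule ℝ (Fin N → ℝ) := LinearMap.range (evalMap (2 * K - 1) t) with hW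
    set U : Submodule ℝ (Fin N → ℝ) :=
      ⨆ m : Fin M, LinearMap.range (anchorMap K t μ m) with hU
    -- the negation gives injectivity of Φ and triviality of range Φ ⊓ W
    have hker : ∀ C : Matrix (Fin D) (Fin K) ℝ, Φ C = 0 → C = 0 := by
      intro C hC
      by_contra hC0
      obtain ⟨n, hn⟩ := hcon C 0 hC0
      apply hn
      have h1 : dotProduct (a (μ n)) (C.mulVec fun k : Fin K => t n ^ (k : ℕ))
          = Φ C n := rfl
      rw [h1, hC]
      simp
    have hinj : Function.Injective Φ := by
      rw [← LinearMap.ker_eq_bot, eq_bot_iff]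
      intro C hC
      exact (Submodule.mem_bot ℝ).2 (hker C (LinearMap.mem_ker.1 hC))
    have hdisj : LinearMap.range Φ ⊓ W = ⊥ := by
      rw [eq_bot_iff]
      rintro y hy
      obtain ⟨⟨C, rfl⟩, p, hp⟩ := Submodule.mem_inf.1 hy
      rcases eq_or_ne C 0 with rfl | hC0
      · simp
      · exfalso
        obtain ⟨n, hn⟩ := hcon C p hC0
        apply hn
        have h1 : dotProduct (a (μ n)) (C.mulVec fun k : Fin K => t n ^ (k : ℕ))
            = Φ C n := rfl
        rw [h1, ← hp]
        rfl
    -- range Φ is contained in U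
    have hrangeU : LinearMap.range Φ ≤ U := by
      rintro y ⟨C, rfl⟩
      have hrepr : Φ C = ∑ m : Fin M,
          anchorMap K t μ m (fun k => ∑ d : Fin D, a m d * C d k) := by
        funext n
        rw [Finset.sum_apply]
        have : ∀ m : Fin M, (anchorMap K t μ m (fun k => ∑ d : Fin D, a m d * C d k)) n
            = if μ n = m then ∑ k : Fin K, (∑ d : Fin D, a m d * C d k) * t n ^ (k : ℕ)
              else 0 := fun m => rfl
        rw [Finset.sum_congr rfl fun m _ => this m, Finset.sum_ite_eq Finset.univ (μ n)]
        simp only [Finset.mem_univ, if_pos]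
        show dotProduct (a (μ n)) (C.mulVec fun k : Fin K => t n ^ (k : ℕ)) = _
        simp only [dotProduct, Matrix.mulVec, Finset.mul_sum, Finset.sum_mul]
        rw [Finset.sum_comm]
        exact Finset.sum_congr rfl fun d _ => Finset.sum_congr rfl fun k _ => by ring
      rw [hrepr]
      exact Submodule.sum_mem _ fun m _ =>
        Submodule.mem_iSup_of_mem m (LinearMap.mem_range_self _ _)
    -- the degree-(K-1) evaluations lie in U and in W
    have hQU : LinearMap.range (evalMap K t) ≤ U := by
      rintro y ⟨q, rfl⟩
      have hrepr : evalMap K t q = ∑ m : Fin M, anchorMap K t μ m q := by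
        funext n
        rw [Finset.sum_apply]
        have : ∀ m : Fin M, (anchorMap K t μ m q) n
            = if μ n = m then ∑ k : Fin K, q k * t n ^ (k : ℕ) else 0 := fun m => rfl
        rw [Finset.sum_congr rfl fun m _ => this m, Finset.sum_ite_eq Finset.univ (μ n)]
        simp only [Finset.mem_univ, if_pos]
        rfl
      rw [hrepr]
      exact Submodule.sum_mem _ fun m _ =>
        Submodule.mem_iSup_of_mem m (LinearMap.mem_range_self _ _)
    have hQW : LinearMap.range (evalMap K t) ≤ W := by
      rintro y ⟨q, rfl⟩
      set q' : ℕ → ℝ := fun j => if h : j < K then q ⟨j, h⟩ else 0 with hq'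
      refine ⟨fun j => q' (j : ℕ), ?_⟩
      funext n
      show ∑ j : Fin (2 * K - 1), q' (j : ℕ) * t n ^ (j : ℕ)
          = ∑ k : Fin K, q k * t n ^ (k : ℕ)
      rw [Fin.sum_univ_eq_sum_range (fun j => q' j * t n ^ j) (2 * K - 1)]
      have h2 : ∀ k : Fin K, q k * t n ^ (k : ℕ) = q' (k : ℕ) * t n ^ (k : ℕ) := by
        intro k; simp [hq']
      rw [Finset.sum_congr rfl fun k _ => h2 k,
        Fin.sum_univ_eq_sum_range (fun j => q' j * t n ^ j) K]
      refine (Finset.sum_subset (Finset.range_subset_range.2 (by omega)) ?_).symm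
      intro j _ hj
      rw [Finset.mem_range, not_lt] at hj
      have : q' j = 0 := by rw [hq']; exact dif_neg (by omega)
      rw [this, zero_mul]
    -- evalMap K t is injective since there are at least K distinct sampling times
    have hinjQ : Function.Injective (evalMap K t) := by
      rw [← LinearMap.ker_eq_bot, eq_bot_iff]
      intro q hq
      rw [LinearMap.mem_ker] at hq
      refine (Submodule.mem_bot ℝ).2 ?_
      set P : Polynomial ℝ := ∑ k : Fin K, Polynomial.monomial (k : ℕ) (q k) with hPdef
      have hPdeg : P.natDegree < K := by
        have : P.natDegree ≤ K - 1 :=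
          Polynomial.natDegree_sum_le_of_forall_le _ _ fun k _ =>
            le_trans (Polynomial.natDegree_monomial_le (q k)) (by have := k.isLt; omega)
        omega
      have heval : ∀ s ∈ T, P.eval s = 0 := by
        intro s hs
        obtain ⟨n, -, rfl⟩ := Finset.mem_image.1 hs
        have h0 := congrFun hq n
        have h1 : (evalMap K t q) n = ∑ k : Fin K, q k * t n ^ (k : ℕ) := rfl
        rw [h1] at h0
        rw [hPdef, Polynomial.eval_finset_sum]
        simpa [Polynomial.eval_monomial] using h0
      have hP0 : P = 0 :=
        Polynomial.eq_zero_of_natDegree_lt_card_of_eval_eq_zero' P T heval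
          (lt_of_lt_of_le hPdeg hτ)
      funext k
      have hc := congrArg (fun Q => Polynomial.coeff Q (k : ℕ)) hP0
      simp only [hPdef, Polynomial.finset_sum_coeff, Polynomial.coeff_monomial,
        Polynomial.coeff_zero] at hc
      rw [Finset.sum_congr rfl (fun j (_ : j ∈ Finset.univ) => by
        rw [show (if (j : ℕ) = (k : ℕ) then q j else 0) = if j = k then q j else 0 by
          simp [Fin.val_eq_val]])] at hc
      rwa [Finset.sum_ite_eq' Finset.univ k q, if_pos (Finset.mem_univ k)] at hc
    -- dimension bookkeeping
    have hQrank : Module.finrank ℝ (LinearMap.range (evalMap K t)) = K := by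
      rw [LinearMap.finrank_range_of_inj hinjQ, Module.finrank_fin_fun ℝ]
    have hUrank : Module.finrank ℝ U
        ≤ ∑ m : Fin M, min (Finset.univ.filter fun n : Fin N => μ n = m).card K := by
      have hsup : U = Finset.univ.sup fun m : Fin M => LinearMap.range (anchorMap K t μ m) := by
        rw [hU, Finset.sup_univ_eq_iSup]
      rw [hsup]
      refine le_trans (finrank_finset_sup_le_sum' _ _) (Finset.sum_le_sum ?_)
      intro m _
      refine le_min ?_ ?_
      · have hsub : LinearMap.range (anchorMap K t μ m) ≤ LinearMap.range (restrMap μ m) := by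
          rintro y ⟨c, rfl⟩
          refine ⟨fun x => ∑ k : Fin K, c k * t x.1 ^ (k : ℕ), ?_⟩
          funext n
          by_cases h : μ n = m <;> simp [restrMap, anchorMap, h]
        calc Module.finrank ℝ (LinearMap.range (anchorMap K t μ m))
            ≤ Module.finrank ℝ (LinearMap.range (restrMap μ m)) := Submodule.finrank_mono hsub
          _ ≤ Module.finrank ℝ ({n : Fin N // μ n = m} → ℝ) := LinearMap.finrank_range_le _
          _ = Fintype.card {n : Fin N // μ n = m} := Module.finrank_fintype_fun_eq_card ℝ
          _ = (Finset.univ.filter fun n : Fin N => μ n = m).card := Fintype.card_subtype _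
      · calc Module.finrank ℝ (LinearMap.range (anchorMap K t μ m))
            ≤ Module.finrank ℝ (Fin K → ℝ) := LinearMap.finrank_range_le _
          _ = K := Module.finrank_fin_fun ℝ
    have hΦrank : Module.finrank ℝ (LinearMap.range Φ) = D * K := by
      rw [LinearMap.finrank_range_of_inj hinj]
      rw [Module.finrank_matrix]
      simp
    have A1 := Submodule.finrank_sup_add_finrank_inf_eq (LinearMap.range Φ) W
    rw [hdisj] at A1
    rw [finrank_bot] at A1
    have A2 : Module.finrank ℝ ↥(LinearMap.range Φ ⊔ W) ≤ Module.finrank ℝ ↥(U ⊔ W) :=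
      Submodule.finrank_mono (sup_le_sup_right hrangeU W)
    have A3 := Submodule.finrank_sup_add_finrank_inf_eq U W
    have A4 : K ≤ Module.finrank ℝ ↥(U ⊓ W) := by
      rw [← hQrank]
      exact Submodule.finrank_mono (le_inf hQU hQW)
    have hmul : K * (D + 1) = D * K + K := by ring
    rw [hmul] at hcount
    linarith [A1, A2, A3, A4, hUrank, hΦrank, hcount]

/-- **Corollary 2, negative direction (continuous localisation).**  With the
polynomial model `f(t) = (1, t, …, t^{K-1})`, anchors `a₀, …, a_{M-1} ∈ ℝ^D` and
anchor assignment `μ`, if `∑ₘ min(kₘ, K) < K(D+1)` where `kₘ = #{n : μ(n) = m}`,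
then for every choice of sampling times the coefficient matrix is not uniquely
determined by the linearized system: there are `C ≠ C'` and symmetric `L, L'`
producing identical measurements. -/
theorem continuous_localisation_not_unique (D K M N : ℕ) (hD : 1 ≤ D) (hK : 1 ≤ K)
    (hN : 1 ≤ N) (a : Fin M → Fin D → ℝ) (μ : Fin N → Fin M)
    (hcount : ∑ m : Fin M, min (Finset.univ.filter fun n : Fin N => μ n = m).card K <
      K * (D + 1)) :
    ∀ t : Fin N → ℝ,
      ∃ (C C' : Matrix (Fin D) (Fin K) ℝ) (L L' : Matrix (Fin K) (Fin K) ℝ),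
        C ≠ C' ∧ L.IsSymm ∧ L'.IsSymm ∧
        ∀ n : Fin N,
          dotProduct (a (μ n)) (C.mulVec fun k : Fin K => t n ^ (k : ℕ)) -
              (1 / 2) * dotProduct (fun k : Fin K => t n ^ (k : ℕ))
                (L.mulVec fun k : Fin K => t n ^ (k : ℕ)) =
            dotProduct (a (μ n)) (C'.mulVec fun k : Fin K => t n ^ (k : ℕ)) -
              (1 / 2) * dotProduct (fun k : Fin K => t n ^ (k : ℕ))
                (L'.mulVec fun k : Fin K => t n ^ (k : ℕ)) := by
  intro t
  classical
  obtain ⟨C, p, hC0, hmeas⟩ := exists_nonzero_C D K M N hD hK a μ hcount t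
  set I : Fin (2 * K - 1) → Fin K := fun d => ⟨min (d : ℕ) (K - 1), by omega⟩ with hI
  set J : Fin (2 * K - 1) → Fin K :=
    fun d => ⟨(d : ℕ) - min (d : ℕ) (K - 1), by have := d.isLt; omega⟩ with hJ
  have hIJ : ∀ d : Fin (2 * K - 1), ((I d : ℕ) + (J d : ℕ)) = (d : ℕ) := by
    intro d; simp only [hI, hJ]; omega
  set L : Matrix (Fin K) (Fin K) ℝ := Matrix.of fun i j => ∑ d : Fin (2 * K - 1),
    ((if I d = i ∧ J d = j then p d else 0) + (if J d = i ∧ I d = j then p d else 0)) with hL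
  have hsymm : L.IsSymm := by
    show Matrix.transpose L = L
    refine Matrix.ext fun i j => ?_
    simp only [Matrix.transpose_apply, hL, Matrix.of_apply]
    refine Finset.sum_congr rfl fun d _ => ?_
    rw [add_comm]
    exact congrArg₂ (· + ·) (if_congr and_comm rfl rfl) (if_congr and_comm rfl rfl)
  have hquad : ∀ n : Fin N,
      dotProduct (fun k : Fin K => t n ^ (k : ℕ))
        (L.mulVec fun k : Fin K => t n ^ (k : ℕ))
      = 2 * ∑ d : Fin (2 * K - 1), p d * t n ^ (d : ℕ) := by
    intro n
    have expand : dotProduct (fun k : Fin K => t n ^ (k : ℕ))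
        (L.mulVec fun k : Fin K => t n ^ (k : ℕ))
        = ∑ i : Fin K, ∑ j : Fin K, ∑ d : Fin (2 * K - 1),
          (((if I d = i ∧ J d = j then p d else 0) + (if J d = i ∧ I d = j then p d else 0))
            * (t n ^ (i : ℕ) * t n ^ (j : ℕ))) := by
      simp only [dotProduct, Matrix.mulVec, hL, Matrix.of_apply, Finset.mul_sum,
        Finset.sum_mul]
      refine Finset.sum_congr rfl fun i _ => Finset.sum_congr rfl fun j _ =>
        Finset.sum_congr rfl fun d _ => by ring
    rw [expand]
    have swap1 : ∀ i : Fin K, ∑ j : Fin K, ∑ d : Fin (2 * K - 1),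
        (((if I d = i ∧ J d = j then p d else 0) + (if J d = i ∧ I d = j then p d else 0))
          * (t n ^ (i : ℕ) * t n ^ (j : ℕ)))
        = ∑ d : Fin (2 * K - 1), ∑ j : Fin K,
        (((if I d = i ∧ J d = j then p d else 0) + (if J d = i ∧ I d = j then p d else 0))
          * (t n ^ (i : ℕ) * t n ^ (j : ℕ))) := fun i => Finset.sum_comm
    rw [Finset.sum_congr rfl fun i _ => swap1 i, Finset.sum_comm]
    have inner : ∀ d : Fin (2 * K - 1), ∑ i : Fin K, ∑ j : Fin K,
        (((if I d = i ∧ J d = j then p d else 0) + (if J d = i ∧ I d = j then p d else 0))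
          * (t n ^ (i : ℕ) * t n ^ (j : ℕ)))
        = 2 * (p d * t n ^ (d : ℕ)) := by
      intro d
      have split : ∀ (i j : Fin K),
          (((if I d = i ∧ J d = j then p d else 0) + (if J d = i ∧ I d = j then p d else 0))
            * (t n ^ (i : ℕ) * t n ^ (j : ℕ)))
          = (if I d = i then (if J d = j then p d * (t n ^ (i : ℕ) * t n ^ (j : ℕ)) else 0) else 0)
            + (if J d = i then (if I d = j then p d * (t n ^ (i : ℕ) * t n ^ (j : ℕ)) else 0)
              else 0) := by
        intro i j
        simp only [add_mul, ite_mul, zero_mul, ite_and]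
      rw [Finset.sum_congr rfl fun i _ => Finset.sum_congr rfl fun j _ => split i j]
      rw [Finset.sum_congr rfl fun i _ => Finset.sum_add_distrib, Finset.sum_add_distrib]
      have e1 : ∑ i : Fin K, ∑ j : Fin K,
          (if I d = i then (if J d = j then p d * (t n ^ (i : ℕ) * t n ^ (j : ℕ)) else 0) else 0)
          = p d * (t n ^ ((I d : ℕ)) * t n ^ ((J d : ℕ))) := by
        simp only [Finset.sum_ite_irrel, Finset.sum_const_zero, Finset.sum_ite_eq,
          Finset.mem_univ, if_true]
      have e2 : ∑ i : Fin K, ∑ j : Fin K,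
          (if J d = i then (if I d = j then p d * (t n ^ (i : ℕ) * t n ^ (j : ℕ)) else 0) else 0)
          = p d * (t n ^ ((J d : ℕ)) * t n ^ ((I d : ℕ))) := by
        simp only [Finset.sum_ite_irrel, Finset.sum_const_zero, Finset.sum_ite_eq,
          Finset.mem_univ, if_true]
      rw [e1, e2, ← pow_add, ← pow_add, hIJ d, Nat.add_comm, hIJ d]
      ring
    rw [Finset.sum_congr rfl fun d _ => inner d, Finset.mul_sum]
  refine ⟨C, 0, L, 0, hC0, hsymm, Matrix.isSymm_zero, ?_⟩
  intro n
  rw [Matrix.zero_mulVec, Matrix.zero_mulVec, dotProduct_zero, dotProduct_zero,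
    hquad n, hmeas n]
  ring
end

section
/- Let K ≥ 1 and let f_0,…,f_{K−1} : ℝ → ℝ be Lebesgue-measurable, linearly independent functions such that every nonzero linear combination of them has a zero set of Lebesgue measure zero. Then the K! functions h_σ : ℝ^K → ℝ, h_σ(t_0,…,t_{K−1}) = ∏_{k=0}^{K−1} f_{σ(k)}(t_k), indexed by permutations σ of {0,…,K−1}, are linearly independent; indeed, any nonzero linear combination Σ_σ α_σ h_σ is nonzero outside a set of K-dimensional Lebesgue measure zero, hence is not almost-everywhere zero. -/
open MeasureTheory

private lemma extend_sum {K L : ℕ} {m : Fin K → Fin L} (hm : Function.Injective m)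
    (c : Fin K → ℝ) (F : Fin L → ℝ) :
    ∑ i : Fin L, (Function.extend m c 0) i * F i = ∑ k : Fin K, c k * F (m k) := by
  classical
  have h1 : ∑ i : Fin L, (Function.extend m c 0) i * F i
      = ∑ i ∈ Finset.univ.image m, (Function.extend m c 0) i * F i := by
    refine (Finset.sum_subset (Finset.subset_univ _) ?_).symm
    intro i _ hi
    have : ¬∃ a, m a = i := by
      intro ⟨a, ha⟩; exact hi (Finset.mem_image.mpr ⟨a, Finset.mem_univ a, ha⟩)
    rw [Function.extend_apply' c (0 : Fin L → ℝ) i this, Pi.zero_apply, zero_mul]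
  rw [h1, Finset.sum_image (fun a _ b _ h => hm h)]
  refine Finset.sum_congr rfl fun k _ => ?_
  rw [hm.extend_apply]

private lemma key : ∀ (K : ℕ) (f : Fin K → ℝ → ℝ), (∀ k, Measurable (f k)) →
    (∀ c : Fin K → ℝ, c ≠ 0 → volume {t : ℝ | ∑ k, c k * f k t = 0} = 0) →
    ∀ α : Equiv.Perm (Fin K) → ℝ, α ≠ 0 →
    volume {t : Fin K → ℝ |
      ∑ σ : Equiv.Perm (Fin K), α σ * ∏ k : Fin K, f (σ k) (t k) = 0} = 0 := by
  intro K
  induction K with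
  | zero =>
      intro f _ _ α hα
      have h1 : ∀ σ : Equiv.Perm (Fin 0), σ = 1 := fun σ => Equiv.ext fun i => i.elim0
      have hα1 : α 1 ≠ 0 := fun h => hα (funext fun σ => by rw [h1 σ]; exact h)
      have hempty : {t : Fin 0 → ℝ |
          ∑ σ : Equiv.Perm (Fin 0), α σ * ∏ k : Fin 0, f (σ k) (t k) = 0} = ∅ := by
        ext t
        simp only [Set.mem_setOf_eq, Set.mem_empty_iff_false, iff_false]
        have h2 : ∑ σ : Equiv.Perm (Fin 0), α σ * ∏ k : Fin 0, f (σ k) (t k) = α 1 := by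
          rw [show (Finset.univ : Finset (Equiv.Perm (Fin 0))) = {1} from by
            ext σ; simp [h1 σ]]
          simp
        rw [h2]; exact hα1
      rw [hempty]; simp
  | succ n ih =>
      intro f hmeas hzero α hα
      classical
      set g : Fin (n+1) → Fin n → ℝ → ℝ := fun j k => f (Equiv.swap 0 j k.succ) with hg
      set β : Fin (n+1) → Equiv.Perm (Fin n) → ℝ :=
        fun j e => α (Equiv.Perm.decomposeFin.symm (j, e)) with hβ
      set c : Fin (n+1) → (Fin n → ℝ) → ℝ :=
        fun j t' => ∑ e : Equiv.Perm (Fin n), β j e * ∏ k : Fin n, g j (e k) (t' k) with hc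
      have hminj : ∀ j : Fin (n+1), Function.Injective (fun k : Fin n => Equiv.swap 0 j k.succ) :=
        fun j a b h => Fin.succ_injective n ((Equiv.swap 0 j).injective h)
      have hgmeas : ∀ j k, Measurable (g j k) := fun j k => hmeas _
      have hgzero : ∀ j : Fin (n+1), ∀ c0 : Fin n → ℝ, c0 ≠ 0 →
          volume {t : ℝ | ∑ k, c0 k * g j k t = 0} = 0 := by
        intro j c0 hc0
        have h1 : {t : ℝ | ∑ k, c0 k * g j k t = 0}
            = {t : ℝ | ∑ i, (Function.extend (fun k : Fin n => Equiv.swap 0 j k.succ) c0 0) i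
                * f i t = 0} := by
          ext t
          simp only [Set.mem_setOf_eq]
          rw [extend_sum (hminj j)]
        rw [h1]
        apply hzero
        intro h
        obtain ⟨k, hk⟩ : ∃ k, c0 k ≠ 0 := by
          by_contra h'; push_neg at h'; exact hc0 (funext h')
        apply hk
        have h2 := congrFun h (Equiv.swap 0 j k.succ)
        rwa [Pi.zero_apply, (hminj j).extend_apply c0 0 k] at h2
      -- the key algebraic identity
      have hsum : ∀ t : Fin (n+1) → ℝ,
          ∑ σ : Equiv.Perm (Fin (n+1)), α σ * ∏ k : Fin (n+1), f (σ k) (t k)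
          = ∑ j : Fin (n+1), f j (t 0) * c j (Fin.tail t) := by
        intro t
        rw [← Equiv.sum_comp (Equiv.Perm.decomposeFin.symm)
          (fun σ : Equiv.Perm (Fin (n+1)) => α σ * ∏ k : Fin (n+1), f (σ k) (t k))]
        rw [Fintype.sum_prod_type]
        refine Finset.sum_congr rfl fun j _ => ?_
        simp only [hc, hβ, hg]
        rw [Finset.mul_sum]
        refine Finset.sum_congr rfl fun e _ => ?_
        rw [Fin.prod_univ_succ]
        simp only [Equiv.Perm.decomposeFin_symm_apply_zero,
          Equiv.Perm.decomposeFin_symm_apply_succ, Fin.tail]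
        ring
      have hcmeas : ∀ j, Measurable (c j) := by
        intro j
        apply Finset.measurable_sum
        intro e _
        apply Measurable.const_mul
        exact Finset.measurable_prod _ fun k _ => (hgmeas j (e k)).comp (measurable_pi_apply k)
      set T : Set ((Fin n → ℝ) × ℝ) := {p | ∑ j : Fin (n+1), f j p.2 * c j p.1 = 0} with hT
      have hTmeas : MeasurableSet T := by
        have hF : Measurable fun p : (Fin n → ℝ) × ℝ => ∑ j : Fin (n+1), f j p.2 * c j p.1 :=
          Finset.measurable_sum _ fun j _ =>
            ((hmeas j).comp measurable_snd).mul ((hcmeas j).comp measurable_fst)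
        exact hF (measurableSet_singleton 0)
      obtain ⟨σ₀, hσ₀⟩ : ∃ σ, α σ ≠ 0 := by
        by_contra h; push_neg at h; exact hα (funext h)
      have h2 : (Equiv.Perm.decomposeFin σ₀).1 = σ₀ 0 := by
        conv_rhs => rw [← Equiv.symm_apply_apply Equiv.Perm.decomposeFin σ₀]
        rw [show Equiv.Perm.decomposeFin σ₀
          = ((Equiv.Perm.decomposeFin σ₀).1, (Equiv.Perm.decomposeFin σ₀).2) from rfl,
          Equiv.Perm.decomposeFin_symm_apply_zero]
      have hdec : Equiv.Perm.decomposeFin.symm (σ₀ 0, (Equiv.Perm.decomposeFin σ₀).2) = σ₀ := by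
        rw [← h2]
        exact Equiv.symm_apply_apply _ _
      have hβ₀ : β (σ₀ 0) ≠ 0 := by
        intro h
        apply hσ₀
        have h3 := congrFun h (Equiv.Perm.decomposeFin σ₀).2
        rw [Pi.zero_apply] at h3
        simp only [hβ] at h3
        rwa [hdec] at h3
      have hB : volume {t' : Fin n → ℝ | c (σ₀ 0) t' = 0} = 0 := by
        have h4 := ih (g (σ₀ 0)) (hgmeas (σ₀ 0)) (hgzero (σ₀ 0)) (β (σ₀ 0)) hβ₀
        simpa only [hc] using h4
      have hae : ∀ᵐ t' : Fin n → ℝ, volume (Prod.mk t' ⁻¹' T) = 0 := by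
        have hc0 : ∀ᵐ t' : Fin n → ℝ, c (σ₀ 0) t' ≠ 0 := by
          rw [ae_iff]
          simpa using hB
        filter_upwards [hc0] with t' ht'
        have hvec : (fun j => c j t') ≠ 0 := fun h => ht' (congrFun h (σ₀ 0))
        have h5 := hzero (fun j => c j t') hvec
        have hswap : ∀ x : ℝ, ∑ j, f j x * c j t' = ∑ j, c j t' * f j x :=
          fun x => Finset.sum_congr rfl fun j _ => mul_comm _ _
        have hset : Prod.mk t' ⁻¹' T = {x : ℝ | ∑ j, c j t' * f j x = 0} := by
          ext x
          simp only [hT, Set.mem_preimage, Set.mem_setOf_eq, hswap x]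
        rw [hset]
        exact h5
      have hprod : ((volume : Measure (Fin n → ℝ)).prod (volume : Measure ℝ)) T = 0 := by
        rw [Measure.measure_prod_null hTmeas]
        exact hae
      have hmp1 := measurePreserving_piFinSuccAbove (fun _ : Fin (n+1) => (volume : Measure ℝ)) 0
      have hmp2 := (Measure.measurePreserving_swap).comp hmp1
      have hfun : (Prod.swap ∘ ⇑(MeasurableEquiv.piFinSuccAbove (fun _ : Fin (n+1) => ℝ) 0))
          = fun t : Fin (n+1) → ℝ => ((Fin.tail t, t 0) : (Fin n → ℝ) × ℝ) := by
        funext t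
        simp [MeasurableEquiv.piFinSuccAbove, Fin.tail, Fin.succAbove_zero]
      rw [hfun] at hmp2
      have hpre : {t : Fin (n+1) → ℝ |
          ∑ σ : Equiv.Perm (Fin (n+1)), α σ * ∏ k : Fin (n+1), f (σ k) (t k) = 0}
          = (fun t : Fin (n+1) → ℝ => ((Fin.tail t, t 0) : (Fin n → ℝ) × ℝ)) ⁻¹' T := by
        ext t
        simp only [hT, Set.mem_setOf_eq, Set.mem_preimage]
        rw [hsum t]
      rw [hpre, volume_pi]
      rw [hmp2.measure_preimage hTmeas.nullMeasurableSet]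
      rw [← volume_pi]
      exact hprod

/-- **Lemma 2 (Measure zero), linear-independence form.**  If `f₀, …, f_{K-1}` are
measurable, linearly independent functions whose nonzero linear combinations vanish
only on null sets, then the `K!` functions `h_σ(t) = ∏_k f_{σ(k)}(t_k)` on `ℝ^K`,
indexed by permutations `σ`, are linearly independent; indeed any nonzero linear
combination `∑_σ α_σ h_σ` vanishes only on a Lebesgue-null subset of `ℝ^K`. -/
theorem perm_products_linearIndependent (K : ℕ) (hK : 1 ≤ K)
    (f : Fin K → ℝ → ℝ)
    (hmeas : ∀ k, Measurable (f k))
    (hli : LinearIndependent ℝ f)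
    (hzero : ∀ c : Fin K → ℝ, c ≠ 0 →
      volume {t : ℝ | ∑ k, c k * f k t = 0} = 0) :
    LinearIndependent ℝ
        (fun (σ : Equiv.Perm (Fin K)) (t : Fin K → ℝ) => ∏ k : Fin K, f (σ k) (t k)) ∧
      ∀ α : Equiv.Perm (Fin K) → ℝ, α ≠ 0 →
        volume {t : Fin K → ℝ |
          ∑ σ : Equiv.Perm (Fin K), α σ * ∏ k : Fin K, f (σ k) (t k) = 0} = 0 := by
  have key2 := key K f hmeas hzero
  constructor
  · rw [Fintype.linearIndependent_iff]
    intro gcoef hg σ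
    by_contra hne
    have hgne : gcoef ≠ 0 := fun h => hne (by rw [h]; rfl)
    have h0 := key2 gcoef hgne
    have huniv : {t : Fin K → ℝ |
        ∑ σ : Equiv.Perm (Fin K), gcoef σ * ∏ k : Fin K, f (σ k) (t k) = 0} = Set.univ := by
      ext t
      simp only [Set.mem_setOf_eq, Set.mem_univ, iff_true]
      have h1 := congrFun hg t
      simpa [Finset.sum_apply, smul_eq_mul] using h1
    rw [huniv] at h0
    have h2 : (volume : Measure (Fin K → ℝ)) Set.univ ≠ 0 :=
      IsOpen.measure_ne_zero volume isOpen_univ Set.univ_nonempty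
    exact h2 h0
  · exact key2
end
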